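/- Let k be a field, P a finite graded poset, t ∈ P a maximal element, Q = P \ {t}, F the set of predecessors of t in P, and B = k^a[Q] the incidence S-ring of Q. Then for every u ∈ F and all n, m with m ≠ n, Tor_{n-1,m}^B(S, B e_{u,t}) = 0. -/

import Mathlib

noncomputable section
open MulOpposite
open scoped DirectSum

namespace P1605

--CHUNK_T_BEGIN

section TensorR

variable (R : Type) [Ring R]
variable (M N : Type) [AddCommGroup M] [AddCommGroup N] [Module Rᵐᵒᵖ M] [Module R N]

/-- The subgroup of the `ℤ`-tensor product by which one quotients to obtain the
balanced tensor product `M ⊗_R N` of a right `R`-module and a left `R`-module. -/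
def trel : Submodule ℤ (TensorProduct ℤ M N) :=
  Submodule.span ℤ {x | ∃ (r : R) (m : M) (n : N),
    x = (op r • m) ⊗ₜ[ℤ] n - m ⊗ₜ[ℤ] (r • n)}

/-- The tensor product `M ⊗_R N` over a (possibly noncommutative) ring `R`,
of a right `R`-module `M` and a left `R`-module `N`. -/
def TensorR : Type := TensorProduct ℤ M N ⧸ trel R M N

instance : AddCommGroup (TensorR R M N) :=
  inferInstanceAs (AddCommGroup (TensorProduct ℤ M N ⧸ trel R M N))

variable {R M N}

/-- The canonical balanced biadditive map `M × N → M ⊗_R N`, `(m, n) ↦ m ⊗ n`. -/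
def tp (m : M) (n : N) : TensorR R M N := Submodule.Quotient.mk (m ⊗ₜ[ℤ] n)

theorem tp_add_left (m m' : M) (n : N) :
    tp (R := R) (m + m') n = tp m n + tp m' n := by
  exact (congrArg Submodule.Quotient.mk (TensorProduct.add_tmul m m' n)).trans
    (Submodule.Quotient.mk_add ..)

theorem tp_add_right (m : M) (n n' : N) :
    tp (R := R) m (n + n') = tp m n + tp m n' := by
  exact (congrArg Submodule.Quotient.mk (TensorProduct.tmul_add m n n')).trans
    (Submodule.Quotient.mk_add ..)

@[simp] theorem tp_zero_left (n : N) : tp (R := R) (0 : M) n = 0 := by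
  show Submodule.Quotient.mk _ = _
  rw [TensorProduct.zero_tmul]; exact Submodule.Quotient.mk_eq_zero _ |>.2 (zero_mem _)

@[simp] theorem tp_zero_right (m : M) : tp (R := R) m (0 : N) = 0 := by
  show Submodule.Quotient.mk _ = _
  rw [TensorProduct.tmul_zero]; exact Submodule.Quotient.mk_eq_zero _ |>.2 (zero_mem _)

/-- The balance relation `(m · r) ⊗ n = m ⊗ (r · n)`. -/
theorem tp_balance (r : R) (m : M) (n : N) :
    tp (R := R) (op r • m) n = tp m (r • n) :=
  (Submodule.Quotient.eq _).2 (Submodule.subset_span ⟨r, m, n, rfl⟩)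

theorem tp_neg_left (m : M) (n : N) : tp (R := R) (-m) n = - tp m n := by
  have := tp_add_left (R := R) m (-m) n
  rw [add_neg_cancel, tp_zero_left] at this
  exact eq_neg_of_add_eq_zero_right this.symm

end TensorR

section TensorR

variable {R : Type} [Ring R]
variable {M N : Type} [AddCommGroup M] [AddCommGroup N] [Module Rᵐᵒᵖ M] [Module R N]
variable {P : Type} [AddCommGroup P]

/-- Universal property: a balanced biadditive map lifts to the tensor product. -/
def liftT (f : M →+ N →+ P)
    (hf : ∀ (r : R) (m : M) (n : N), f (op r • m) n = f m (r • n)) :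
    TensorR R M N →+ P :=
  ((trel R M N).liftQ
    (TensorProduct.lift (LinearMap.mk₂ ℤ (fun m n => f m n)
      (fun m m' n => by simp)
      (fun z m n => by simp)
      (fun m n n' => by simp)
      (fun z m n => by simp)))
    (by
      rw [trel, Submodule.span_le]
      rintro x ⟨r, m, n, rfl⟩
      refine LinearMap.mem_ker.2 ?_; erw [map_sub, TensorProduct.lift.tmul, TensorProduct.lift.tmul]; simp [hf r m n])).toAddMonoidHom

@[simp] theorem liftT_tp (f : M →+ N →+ P)
    (hf : ∀ (r : R) (m : M) (n : N), f (op r • m) n = f m (r • n)) (m : M) (n : N) :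
    liftT f hf (tp m n) = f m n := rfl

theorem TensorR.ind {motive : TensorR R M N → Prop} (z : TensorR R M N)
    (h0 : motive 0) (htp : ∀ m n, motive (tp m n))
    (hadd : ∀ x y, motive x → motive y → motive (x + y)) : motive z := by
  obtain ⟨w, rfl⟩ := Submodule.Quotient.mk_surjective _ z
  induction w using TensorProduct.induction_on with
  | zero =>
      have : (Submodule.Quotient.mk (0 : TensorProduct ℤ M N) : TensorR R M N) = 0 :=
        (Submodule.Quotient.mk_eq_zero _).2 (zero_mem _)
      rw [this]; exact h0
  | tmul m n => exact htp m n
  | add x y hx hy =>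
      rw [Submodule.Quotient.mk_add]
      exact hadd _ _ hx hy

theorem TensorR.addHom_ext {f g : TensorR R M N →+ P}
    (h : ∀ m n, f (tp m n) = g (tp m n)) : f = g := by
  ext z
  induction z using TensorR.ind with
  | h0 => simp
  | htp m n => exact h m n
  | hadd x y hx hy => simp [hx, hy]

variable {M' N' : Type} [AddCommGroup M'] [AddCommGroup N'] [Module Rᵐᵒᵖ M'] [Module R N']

/-- Functoriality of the tensor product in both arguments, for equivariant additive maps. -/
def mapT (f : M →+ M') (g : N →+ N')
    (hf : ∀ (r : R) (m : M), f (op r • m) = op r • f m)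
    (hg : ∀ (r : R) (n : N), g (r • n) = r • g n) :
    TensorR R M N →+ TensorR R M' N' :=
  liftT (P := TensorR R M' N')
    (AddMonoidHom.mk' (fun m => AddMonoidHom.mk' (fun n => tp (R := R) (f m) (g n))
        (fun n n' => by rw [map_add, tp_add_right]))
      (fun m m' => by
        ext n
        show tp (R := R) (f (m + m')) (g n) = tp (f m) (g n) + tp (f m') (g n)
        rw [map_add, tp_add_left]))
    (fun r m n => by
      show tp (f (op r • m)) (g n) = tp (f m) (g (r • n))
      rw [hf, hg]; exact tp_balance r (f m) (g n))

@[simp] theorem mapT_tp (f : M →+ M') (g : N →+ N')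
    (hf : ∀ (r : R) (m : M), f (op r • m) = op r • f m)
    (hg : ∀ (r : R) (n : N), g (r • n) = r • g n) (m : M) (n : N) :
    mapT f g hf hg (tp m n) = tp (f m) (g n) := rfl

/-- A convenient unbundled version of the universal property. -/
def liftT₂ (f : M → N → P)
    (h1 : ∀ m m' n, f (m + m') n = f m n + f m' n)
    (h2 : ∀ m n n', f m (n + n') = f m n + f m n')
    (hb : ∀ (r : R) m n, f (op r • m) n = f m (r • n)) : TensorR R M N →+ P :=
  liftT (AddMonoidHom.mk' (fun m => AddMonoidHom.mk' (f m) (h2 m))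
    (fun m m' => AddMonoidHom.ext fun n => h1 m m' n)) hb

@[simp] theorem liftT₂_tp (f : M → N → P) (h1 : ∀ m m' n, f (m + m') n = f m n + f m' n)
    (h2 : ∀ m n n', f m (n + n') = f m n + f m n')
    (hb : ∀ (r : R) m n, f (op r • m) n = f m (r • n)) (m : M) (n : N) :
    liftT₂ f h1 h2 hb (tp m n) = f m n := rfl

end TensorR

section Modules

variable {R : Type} [Ring R]
variable {M N : Type} [AddCommGroup M] [AddCommGroup N] [Module Rᵐᵒᵖ M] [Module R N]

section Left
variable [Module R M] [SMulCommClass R Rᵐᵒᵖ M]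

/-- Left `R`-action on the tensor product, through the left factor. -/
def lsmT (r : R) : TensorR R M N →+ TensorR R M N :=
  mapT (DistribMulAction.toAddMonoidHom M r) (AddMonoidHom.id N)
    (fun s m => smul_comm r (op s) m) (fun _ _ => rfl)

instance instModLeftTensorR : Module R (TensorR R M N) where
  smul r z := lsmT r z
  one_smul z := by
    show lsmT 1 z = z
    induction z using TensorR.ind with
    | h0 => simp
    | htp m n => show tp ((1:R) • m) n = tp m n; rw [one_smul]
    | hadd x y hx hy => rw [map_add, hx, hy]
  mul_smul r s z := by
    show lsmT (r * s) z = lsmT r (lsmT s z)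
    induction z using TensorR.ind with
    | h0 => simp
    | htp m n => show tp ((r * s) • m) n = tp (r • s • m) n; rw [mul_smul]
    | hadd x y hx hy => simp only [map_add, hx, hy]
  smul_zero r := by show lsmT r 0 = 0; simp
  smul_add r x y := by show lsmT r (x + y) = lsmT r x + lsmT r y; simp
  add_smul r s z := by
    show lsmT (r + s) z = lsmT r z + lsmT s z
    induction z using TensorR.ind with
    | h0 => simp
    | htp m n =>
        show tp ((r + s) • m) n = tp (r • m) n + tp (s • m) n
        rw [add_smul, tp_add_left]
    | hadd x y hx hy =>
        rw [map_add, hx, hy, map_add, map_add]; abel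
  zero_smul z := by
    show lsmT 0 z = 0
    induction z using TensorR.ind with
    | h0 => simp
    | htp m n => show tp ((0:R) • m) n = 0; rw [zero_smul, tp_zero_left]
    | hadd x y hx hy => rw [map_add, hx, hy, add_zero]

@[simp] theorem lsm_tp (r : R) (m : M) (n : N) :
    r • (tp (R := R) m n : TensorR R M N) = tp (r • m) n := rfl

end Left

section Right
variable [Module Rᵐᵒᵖ N] [SMulCommClass R Rᵐᵒᵖ N]

/-- Right `R`-action on the tensor product, through the right factor. -/
def rsmT (s : Rᵐᵒᵖ) : TensorR R M N →+ TensorR R M N :=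
  mapT (AddMonoidHom.id M) (DistribMulAction.toAddMonoidHom N s)
    (fun _ _ => rfl) (fun r n => (smul_comm r s n).symm)

instance instModRightTensorR : Module Rᵐᵒᵖ (TensorR R M N) where
  smul s z := rsmT s z
  one_smul z := by
    show rsmT 1 z = z
    induction z using TensorR.ind with
    | h0 => simp
    | htp m n => show tp m ((1:Rᵐᵒᵖ) • n) = tp m n; rw [one_smul]
    | hadd x y hx hy => rw [map_add, hx, hy]
  mul_smul r s z := by
    show rsmT (r * s) z = rsmT r (rsmT s z)
    induction z using TensorR.ind with
    | h0 => simp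
    | htp m n => show tp m ((r * s) • n) = tp m (r • s • n); rw [mul_smul]
    | hadd x y hx hy => simp only [map_add, hx, hy]
  smul_zero r := by show rsmT r 0 = 0; simp
  smul_add r x y := by show rsmT r (x + y) = rsmT r x + rsmT r y; simp
  add_smul r s z := by
    show rsmT (r + s) z = rsmT r z + rsmT s z
    induction z using TensorR.ind with
    | h0 => simp
    | htp m n =>
        show tp m ((r + s) • n) = tp m (r • n) + tp m (s • n)
        rw [add_smul, tp_add_right]
    | hadd x y hx hy => rw [map_add, hx, hy, map_add, map_add]; abel
  zero_smul z := by
    show rsmT 0 z = 0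
    induction z using TensorR.ind with
    | h0 => simp
    | htp m n => show tp m ((0:Rᵐᵒᵖ) • n) = 0; rw [zero_smul, tp_zero_right]
    | hadd x y hx hy => rw [map_add, hx, hy, add_zero]

@[simp] theorem rsm_tp (s : Rᵐᵒᵖ) (m : M) (n : N) :
    s • (tp (R := R) m n : TensorR R M N) = tp m (s • n) := rfl

end Right

instance instSMulCommTensorR [Module R M] [SMulCommClass R Rᵐᵒᵖ M]
    [Module Rᵐᵒᵖ N] [SMulCommClass R Rᵐᵒᵖ N] :
    SMulCommClass R Rᵐᵒᵖ (TensorR R M N) where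
  smul_comm r s z := by
    induction z using TensorR.ind with
    | h0 => simp
    | htp m n => rw [rsm_tp, lsm_tp, lsm_tp, rsm_tp]
    | hadd x y hx hy => simp only [smul_add, hx, hy]

end Modules

section Assoc

variable {R : Type} [Ring R]
variable {M N P : Type} [AddCommGroup M] [AddCommGroup N] [AddCommGroup P]
variable [Module Rᵐᵒᵖ M]
variable [Module R N] [Module Rᵐᵒᵖ N] [SMulCommClass R Rᵐᵒᵖ N]
variable [Module R P]

/-- The associator `(M ⊗_R N) ⊗_R P → M ⊗_R (N ⊗_R P)`. -/
def assocT : TensorR R (TensorR R M N) P →+ TensorR R M (TensorR R N P) :=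
  liftT (P := TensorR R M (TensorR R N P))
    (liftT (P := P →+ TensorR R M (TensorR R N P))
      (AddMonoidHom.mk' (fun m => AddMonoidHom.mk'
          (fun n => AddMonoidHom.mk' (fun p => tp (R := R) m (tp (R := R) n p))
            (fun p p' => by rw [tp_add_right, tp_add_right]))
          (fun n n' => by
            ext p
            show tp (R := R) m (tp (R := R) (n + n') p) = tp m (tp n p) + tp m (tp n' p)
            rw [tp_add_left, tp_add_right]))
        (fun m m' => by
          ext n p
          show tp (R := R) (m + m') (tp (R := R) n p)
              = tp m (tp n p) + tp m' (tp n p)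
          rw [tp_add_left]))
      (fun r m n => by
        ext p
        show tp (R := R) (op r • m) (tp (R := R) n p) = tp m (tp (r • n) p)
        rw [tp_balance, lsm_tp]))
    (fun r x p => by
      induction x using TensorR.ind with
      | h0 => simp
      | htp m n =>
          rw [rsm_tp]
          show tp (R := R) m (tp (R := R) (op r • n) p) = tp m (tp n (r • p))
          rw [tp_balance]
      | hadd x y hx hy =>
          simp only [smul_add, map_add, AddMonoidHom.add_apply, hx, hy])

@[simp] theorem assocT_tp (m : M) (n : N) (p : P) :
    assocT (R := R) (tp (tp m n) p) = tp m (tp n p) := rfl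

/-- The associator `M ⊗_R (N ⊗_R P) → (M ⊗_R N) ⊗_R P`. -/
def assocT' : TensorR R M (TensorR R N P) →+ TensorR R (TensorR R M N) P :=
  liftT (P := TensorR R (TensorR R M N) P)
    (AddMonoidHom.mk'
      (fun m => liftT (P := TensorR R (TensorR R M N) P)
        (AddMonoidHom.mk' (fun n => AddMonoidHom.mk'
            (fun p => tp (R := R) (tp (R := R) m n) p)
            (fun p p' => by rw [tp_add_right]))
          (fun n n' => by
            ext p
            show tp (R := R) (tp (R := R) m (n + n')) p
                = tp (tp m n) p + tp (tp m n') p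
            rw [tp_add_right, tp_add_left]))
        (fun r n p => by
          show tp (R := R) (tp (R := R) m (op r • n)) p = tp (tp m n) (r • p)
          rw [show tp (R := R) m (op r • n) = op r • tp (R := R) m n from
            (rsm_tp _ _ _).symm, tp_balance]))
      (fun m m' => by
        apply TensorR.addHom_ext (R := R)
        intro n p
        show tp (R := R) (tp (R := R) (m + m') n) p
            = tp (tp m n) p + tp (tp m' n) p
        rw [tp_add_left, tp_add_left]))
    (fun r m w => by
      induction w using TensorR.ind with
      | h0 => simp
      | htp n p =>
          show tp (R := R) (tp (R := R) (op r • m) n) p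
              = tp (R := R) (tp (R := R) m (r • n)) p
          rw [tp_balance (R := R) r m n]
      | hadd x y hx hy => rw [smul_add, map_add, hx, hy, map_add])

@[simp] theorem assocT'_tp (m : M) (n : N) (p : P) :
    assocT' (R := R) (tp m (tp n p)) = tp (tp m n) p := rfl

end Assoc

/-- Transport of an additive group along an equality of indices in a family. -/
def fcast {α : Sort*} (F : α → Type) [∀ x, AddCommGroup (F x)] {a b : α} (h : a = b) :
    F a ≃+ F b := by subst h; exact AddEquiv.refl _

@[simp] theorem fcast_rfl {α : Sort*} (F : α → Type) [∀ x, AddCommGroup (F x)] (a : α)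
    (x : F a) : fcast F (rfl : a = a) x = x := rfl

--CHUNK_T_END

--CHUNK_G_BEGIN
section GradedRings

variable (R : Type) [Ring R]

/-- A connected graded `R`-ring: a ring `A` together with an `ℕ`-grading by additive
subgroups whose degree-zero part is a copy of `R` (via `emb`), with the multiplicative
grading property.  The (unique) augmentation `A → R` is part of the data. -/
structure GRing (A : Type) [Ring A] where
  emb : R →+* A
  aug : A →+* R
  deg : ℕ → AddSubgroup A
  internal : DirectSum.IsInternal deg
  emb_mem : ∀ r : R, emb r ∈ deg 0
  emb_surj : ∀ x ∈ deg 0, ∃ r : R, emb r = x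
  emb_inj : Function.Injective emb
  mul_mem : ∀ {p q : ℕ} {x y : A}, x ∈ deg p → y ∈ deg q → x * y ∈ deg (p + q)
  aug_emb : ∀ r : R, aug (emb r) = r
  aug_deg : ∀ (n : ℕ), ∀ x ∈ deg (n + 1), aug x = 0

variable {R}

/-- A connected graded ring is strongly graded when every multiplication map
`A_p ⊗ A_q → A_{p+q}` is surjective, i.e. each element of `A_{p+q}` is a sum of
products of elements of degrees `p` and `q`. -/
def GRing.StronglyGraded {A : Type} [Ring A] (G : GRing R A) : Prop :=
  ∀ p q : ℕ, ∀ z ∈ G.deg (p + q),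
    z ∈ AddSubgroup.closure {w : A | ∃ x ∈ G.deg p, ∃ y ∈ G.deg q, w = x * y}

/-- A grading, compatible with a graded ring `G`, on an `A`-module `M`. -/
structure GMod {A : Type} [Ring A] (G : GRing R A) (M : Type) [AddCommGroup M]
    [Module A M] where
  deg : ℕ → AddSubgroup M
  internal : DirectSum.IsInternal deg
  smul_mem : ∀ {p d : ℕ} {a : A} {x : M}, a ∈ G.deg p → x ∈ deg d → a • x ∈ deg (p + d)

/-- A resolution of `R` by projective graded left `A`-modules, in which the `n`-th
module is generated by its homogeneous component of degree `n`.  Existence of such a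
resolution is the definition of Koszulity. -/
structure KResolution {A : Type} [Ring A] (G : GRing R A) where
  P : ℕ → Type
  [acg : ∀ n, AddCommGroup (P n)]
  [mod : ∀ n, Module A (P n)]
  proj : ∀ n, Module.Projective A (P n)
  g : ∀ n, ℕ → AddSubgroup (P n)
  internal : ∀ n, DirectSum.IsInternal (g n)
  smul_mem : ∀ (n : ℕ) {p d : ℕ} {a : A} {x : P n},
    a ∈ G.deg p → x ∈ g n d → a • x ∈ g n (p + d)
  f : ∀ n, P (n + 1) →+ P n
  f_linear : ∀ (n : ℕ) (a : A) (x : P (n + 1)), f n (a • x) = a • f n x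
  f_graded : ∀ (n d : ℕ), ∀ x ∈ g (n + 1) d, f n x ∈ g n d
  eps : P 0 →+ R
  eps_linear : ∀ (a : A) (x : P 0), eps (a • x) = G.aug a * eps x
  eps_surj : Function.Surjective eps
  eps_graded : ∀ (d : ℕ), ∀ x ∈ g 0 (d + 1), eps x = 0
  comp0 : ∀ x : P 1, eps (f 0 x) = 0
  exact0 : ∀ x : P 0, eps x = 0 → x ∈ Set.range (f 0)
  comp : ∀ (n : ℕ) (x : P (n + 2)), f n (f (n + 1) x) = 0
  exact : ∀ (n : ℕ) (x : P (n + 1)), f n x = 0 → x ∈ Set.range (f (n + 1))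
  gen : ∀ (n : ℕ) (x : P n),
    x ∈ AddSubgroup.closure {z : P n | ∃ (a : A), ∃ y ∈ g n n, z = a • y}

/-- A connected graded `R`-ring is Koszul if `R` admits a resolution by projective
graded left `A`-modules such that the `n`-th module is generated in degree `n`. -/
def GRing.IsKoszul {A : Type} [Ring A] (G : GRing R A) : Prop :=
  Nonempty (KResolution G)

end GradedRings
--CHUNK_G_END

--CHUNK_B_BEGIN
section BarComplex

variable (R : Type) [Ring R]

/-- The data needed to form the (normalized, bigraded) bar complex of a connected
graded `R`-ring with coefficients in a graded left module: the components of the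
ring and of the module, the multiplication maps and the action maps. -/
structure BarData where
  A : ℕ → Type
  [acgA : ∀ n, AddCommGroup (A n)]
  [modA : ∀ n, Module R (A n)]
  [modAop : ∀ n, Module Rᵐᵒᵖ (A n)]
  [smulcommA : ∀ n, SMulCommClass R Rᵐᵒᵖ (A n)]
  N : ℕ → Type
  [acgN : ∀ d, AddCommGroup (N d)]
  [modN : ∀ d, Module R (N d)]
  μ : ∀ p q, TensorR R (A p) (A q) →+ A (p + q)
  μ_lsmul : ∀ (p q : ℕ) (r : R) (z : TensorR R (A p) (A q)), μ p q (r • z) = r • μ p q z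
  μ_rsmul : ∀ (p q : ℕ) (s : Rᵐᵒᵖ) (z : TensorR R (A p) (A q)), μ p q (s • z) = s • μ p q z
  σ : ∀ p d, TensorR R (A p) (N d) →+ N (p + d)
  σ_lsmul : ∀ (p d : ℕ) (r : R) (z : TensorR R (A p) (N d)), σ p d (r • z) = r • σ p d z

attribute [instance] BarData.acgA BarData.modA BarData.modAop BarData.smulcommA
  BarData.acgN BarData.modN

/-- An auxiliary bundle of an abelian group with a left `R`-module structure. -/
structure ModBundle : Type 1 where
  T : Type
  [acg : AddCommGroup T]
  [mod : Module R T]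

attribute [instance] ModBundle.acg ModBundle.mod

variable {R} (B : BarData R)

/-- The iterated tensor product `A_{a_1} ⊗_R ⋯ ⊗_R A_{a_k} ⊗_R N_d`, bundled
with its group and module structure. -/
def chainB : List ℕ → ℕ → ModBundle R
  | [], d => ⟨B.N d⟩
  | a :: l, d => ⟨TensorR R (B.A a) (chainB l d).T⟩

/-- The iterated tensor product `A_{a_1} ⊗_R ⋯ ⊗_R A_{a_k} ⊗_R N_d`. -/
def Chain (l : List ℕ) (d : ℕ) : Type := (chainB B l d).T

instance (l : List ℕ) (d : ℕ) : AddCommGroup (Chain B l d) := (chainB B l d).acg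
instance (l : List ℕ) (d : ℕ) : Module R (Chain B l d) := (chainB B l d).mod

section Maps

variable {B}

/-- The left tensoring of a linear map. -/
def lmapL {M X Y : Type} [AddCommGroup M] [Module Rᵐᵒᵖ M] [Module R M]
    [SMulCommClass R Rᵐᵒᵖ M] [AddCommGroup X] [AddCommGroup Y] [Module R X] [Module R Y]
    (g : X →ₗ[R] Y) : TensorR R M X →ₗ[R] TensorR R M Y where
  toFun := mapT (AddMonoidHom.id M) g.toAddMonoidHom (fun _ _ => rfl)
    (fun r x => g.map_smul r x)
  map_add' := map_add _
  map_smul' r z := by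
    induction z using TensorR.ind with
    | h0 => simp
    | htp m x => rfl
    | hadd x y hx hy => rw [smul_add, map_add, hx, hy, map_add, smul_add]

@[simp] theorem lmapL_tp {M X Y : Type} [AddCommGroup M] [Module Rᵐᵒᵖ M] [Module R M]
    [SMulCommClass R Rᵐᵒᵖ M] [AddCommGroup X] [AddCommGroup Y] [Module R X] [Module R Y]
    (g : X →ₗ[R] Y) (m : M) (x : X) : lmapL g (tp m x) = tp (R := R) m (g x) := rfl

/-- The action map as a linear map. -/
def sigL (p d : ℕ) : TensorR R (B.A p) (B.N d) →ₗ[R] B.N (p + d) where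
  toFun := B.σ p d
  map_add' := map_add _
  map_smul' r z := B.σ_lsmul p d r z

/-- Multiplication of the two leftmost tensor factors. -/
def mh (a b : ℕ) (X : Type) [AddCommGroup X] [Module R X] :
    TensorR R (B.A a) (TensorR R (B.A b) X) →+ TensorR R (B.A (a + b)) X :=
  liftT (P := TensorR R (B.A (a + b)) X)
    (AddMonoidHom.mk'
      (fun x => liftT (P := TensorR R (B.A (a + b)) X)
        (AddMonoidHom.mk' (fun y => AddMonoidHom.mk'
            (fun z => tp (R := R) (B.μ a b (tp x y)) z)
            (fun z z' => by rw [tp_add_right]))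
          (fun y y' => by
            ext z
            show tp (R := R) (B.μ a b (tp x (y + y'))) z
                = tp (B.μ a b (tp x y)) z + tp (B.μ a b (tp x y')) z
            rw [tp_add_right, map_add, tp_add_left]))
        (fun r y z => by
          show tp (R := R) (B.μ a b (tp x (op r • y))) z = tp (B.μ a b (tp x y)) (r • z)
          rw [← rsm_tp, B.μ_rsmul, tp_balance]))
      (fun x x' => by
        apply TensorR.addHom_ext (R := R)
        intro y z
        show tp (R := R) (B.μ a b (tp (x + x') y)) z
            = tp (B.μ a b (tp x y)) z + tp (B.μ a b (tp x' y)) z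
        rw [tp_add_left, map_add, tp_add_left]))
    (fun r x w => by
      induction w using TensorR.ind with
      | h0 => simp
      | htp y z =>
          show tp (R := R) (B.μ a b (tp (op r • x) y)) z = tp (B.μ a b (tp x (r • y))) z
          rw [tp_balance]
      | hadd u v hu hv => simp only [smul_add, map_add, hu, hv])

@[simp] theorem mh_tp (a b : ℕ) (X : Type) [AddCommGroup X] [Module R X]
    (x : B.A a) (y : B.A b) (z : X) :
    mh a b X (tp x (tp y z)) = tp (R := R) (B.μ a b (tp x y)) z := rfl

theorem mh_lsmul (a b : ℕ) (X : Type) [AddCommGroup X] [Module R X] (r : R)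
    (w : TensorR R (B.A a) (TensorR R (B.A b) X)) :
    mh a b X (r • w) = r • mh a b X w := by
  induction w using TensorR.ind with
  | h0 => simp
  | htp x v =>
      rw [lsm_tp]
      induction v using TensorR.ind with
      | h0 => simp
      | htp y z =>
          rw [mh_tp, mh_tp, lsm_tp, ← B.μ_lsmul, lsm_tp]
      | hadd u v hu hv =>
          rw [tp_add_right, tp_add_right, map_add, map_add, hu, hv, smul_add]
  | hadd u v hu hv => rw [smul_add, map_add, hu, hv, map_add, smul_add]

/-- Multiplication of the two leftmost tensor factors, as a linear map. -/
def mhL (a b : ℕ) (X : Type) [AddCommGroup X] [Module R X] :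
    TensorR R (B.A a) (TensorR R (B.A b) X) →ₗ[R] TensorR R (B.A (a + b)) X where
  toFun := mh a b X
  map_add' := map_add _
  map_smul' r z := mh_lsmul a b X r z

end Maps

/-- The index, in the bar complex, obtained by merging the two entries at
positions `i` and `i + 1` of a composition (the module coefficient is treated as
the last entry). -/
def mIdx : List ℕ → ℕ → ℕ → List ℕ × ℕ
  | [], d, _ => ([], d)
  | [a], d, _ => ([], a + d)
  | a :: b :: l, d, 0 => ((a + b) :: l, d)
  | a :: b :: l, d, i + 1 => (a :: (mIdx (b :: l) d i).1, (mIdx (b :: l) d i).2)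

@[simp] theorem mIdx_nil (d i : ℕ) : mIdx [] d i = ([], d) := rfl
@[simp] theorem mIdx_single (a d i : ℕ) : mIdx [a] d i = ([], a + d) := rfl
@[simp] theorem mIdx_cons₀ (a b : ℕ) (l : List ℕ) (d : ℕ) :
    mIdx (a :: b :: l) d 0 = ((a + b) :: l, d) := rfl
@[simp] theorem mIdx_consₛ (a b : ℕ) (l : List ℕ) (d i : ℕ) :
    mIdx (a :: b :: l) d (i + 1)
      = (a :: (mIdx (b :: l) d i).1, (mIdx (b :: l) d i).2) := rfl

theorem mIdx_spec (i : ℕ) : ∀ (l : List ℕ) (d : ℕ), l ≠ [] →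
    (mIdx l d i).1.length + 1 = l.length ∧
    (mIdx l d i).1.sum + (mIdx l d i).2 = l.sum + d ∧
    ((∀ a ∈ l, a ≠ 0) → ∀ a ∈ (mIdx l d i).1, a ≠ 0) := by
  induction i with
  | zero =>
      rintro (_ | ⟨a, _ | ⟨b, l⟩⟩) d hl
      · exact absurd rfl hl
      · simp
      · refine ⟨by simp only [mIdx_cons₀, List.length_cons], by
          simp only [mIdx_cons₀, List.sum_cons]; ring, ?_⟩
        intro hpos c hc
        simp only [mIdx_cons₀, List.mem_cons] at hc
        rcases hc with h | h
        · subst h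
          have := hpos a (by simp)
          have := hpos b (by simp)
          omega
        · exact hpos c (by simp [h])
  | succ i ih =>
      rintro (_ | ⟨a, _ | ⟨b, l⟩⟩) d hl
      · exact absurd rfl hl
      · simp
      · obtain ⟨h1, h2, h3⟩ := ih (b :: l) d (by simp)
        refine ⟨by simp only [mIdx_consₛ, List.length_cons] at h1 ⊢; omega, by
          simp only [mIdx_consₛ, List.sum_cons] at h2 ⊢; omega, ?_⟩
        intro hpos c hc
        simp only [mIdx_consₛ, List.mem_cons] at hc
        rcases hc with h | h
        · subst h; exact hpos c (by simp)
        · exact h3 (fun x hx => hpos x (by simp [hx])) c h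

/-- The merging map on iterated tensor products: multiply the entries at
positions `i` and `i+1` (the module coefficient being the last entry). -/
def mMap : (l : List ℕ) → (d i : ℕ) → Chain B l d →ₗ[R] Chain B (mIdx l d i).1 (mIdx l d i).2
  | [], _, _ => LinearMap.id
  | [a], d, _ => sigL (B := B) a d
  | a :: b :: l, d, 0 => mhL (B := B) a b (Chain B l d)
  | _ :: b :: l, d, i + 1 => lmapL (mMap (b :: l) d i)

/-- The index set of the internal-degree-`m`, homological-degree-`n` component of
the bar complex: compositions into `n` positive parts together with a module
degree, of total degree `m`. -/
def BIdx (n m : ℕ) : Type :=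
  {p : List ℕ × ℕ // p.1.length = n ∧ p.1.sum + p.2 = m ∧ ∀ a ∈ p.1, a ≠ 0}

instance (n m : ℕ) : DecidableEq (BIdx n m) := fun a b =>
  decidable_of_iff (a.1 = b.1) Subtype.ext_iff.symm

/-- The `(n, m)` component of the (normalized) bar complex `Ω_*(A, m)`:
the direct sum, over compositions `m = m_1 + ⋯ + m_n + d` with the `m_i` positive,
of `A_{m_1} ⊗ ⋯ ⊗ A_{m_n} ⊗ N_d`. -/
def Bar (n m : ℕ) : Type := ⨁ (p : BIdx n m), Chain B p.1.1 p.1.2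

instance (n m : ℕ) : AddCommGroup (Bar B n m) :=
  inferInstanceAs (AddCommGroup (⨁ (p : BIdx n m), Chain B p.1.1 p.1.2))

/-- Merging at position `i`, on indices. -/
def mBIdx (n m : ℕ) (p : BIdx (n + 1) m) (i : ℕ) : BIdx n m := by
  refine ⟨mIdx p.1.1 p.1.2 i, ?_⟩
  have hne : p.1.1 ≠ [] := by
    intro h
    have := p.2.1
    rw [h] at this
    simp at this
  obtain ⟨h1, h2, h3⟩ := mIdx_spec i p.1.1 p.1.2 hne
  exact ⟨by have := p.2.1; omega, by have := p.2.2.1; omega, h3 p.2.2.2⟩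

/-- The bar differential. -/
def dBar (n m : ℕ) : Bar B (n + 1) m →+ Bar B n m :=
  DirectSum.toAddMonoid fun p =>
    ∑ i ∈ Finset.range (n + 1), (-1 : ℤ) ^ i •
      ((DirectSum.of (fun q : BIdx n m => Chain B q.1.1 q.1.2) (mBIdx n m p i)).comp
        (mMap B p.1.1 p.1.2 i).toAddMonoidHom)

/-- The bigraded Tor groups `Tor^A_{n,m}(R, N)`, defined as the homology of the
internal-degree-`m` part of the normalized bar complex. -/
def Tor : ℕ → ℕ → Type
  | 0, m => Bar B 0 m ⧸ (dBar B 0 m).range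
  | n + 1, m => (dBar B n m).ker ⧸ ((dBar B (n + 1) m).range.addSubgroupOf (dBar B n m).ker)

instance : ∀ (n m : ℕ), AddCommGroup (Tor B n m)
  | 0, m => inferInstanceAs (AddCommGroup (Bar B 0 m ⧸ (dBar B 0 m).range))
  | n + 1, m => inferInstanceAs
      (AddCommGroup ((dBar B n m).ker ⧸ ((dBar B (n + 1) m).range.addSubgroupOf (dBar B n m).ker)))

end BarComplex
--CHUNK_B_END

--CHUNK_B2_BEGIN
section BarOfGRing

variable {R : Type} [Ring R] {A : Type} [Ring A]

/-- The homogeneous component of degree `n` of a connected graded ring. -/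
def GRing.Deg (G : GRing R A) (n : ℕ) : Type := ↥(G.deg n)

instance (G : GRing R A) (n : ℕ) : AddCommGroup (G.Deg n) :=
  inferInstanceAs (AddCommGroup ↥(G.deg n))

instance (G : GRing R A) (n : ℕ) : Module R (G.Deg n) where
  smul r x := ⟨G.emb r * x.1, by
    have := G.mul_mem (G.emb_mem r) x.2; rwa [zero_add] at this⟩
  one_smul x := Subtype.ext (by show G.emb 1 * x.1 = x.1; rw [map_one, one_mul])
  mul_smul r s x := Subtype.ext (by
    show G.emb (r * s) * x.1 = G.emb r * (G.emb s * x.1); rw [map_mul, mul_assoc])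
  smul_zero r := Subtype.ext (by show G.emb r * 0 = 0; rw [mul_zero])
  smul_add r x y := Subtype.ext (by
    show G.emb r * (x.1 + y.1) = G.emb r * x.1 + G.emb r * y.1; rw [mul_add])
  add_smul r s x := Subtype.ext (by
    show G.emb (r + s) * x.1 = G.emb r * x.1 + G.emb s * x.1; rw [map_add, add_mul])
  zero_smul x := Subtype.ext (by show G.emb 0 * x.1 = 0; rw [map_zero, zero_mul])

instance (G : GRing R A) (n : ℕ) : Module Rᵐᵒᵖ (G.Deg n) where
  smul s x := ⟨x.1 * G.emb s.unop, G.mul_mem x.2 (G.emb_mem s.unop)⟩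
  one_smul x := Subtype.ext (by
    show x.1 * G.emb (unop 1) = x.1; rw [unop_one, map_one, mul_one])
  mul_smul r s x := Subtype.ext (by
    show x.1 * G.emb (r * s).unop = (x.1 * G.emb s.unop) * G.emb r.unop
    rw [unop_mul, map_mul, mul_assoc])
  smul_zero r := Subtype.ext (by show 0 * G.emb r.unop = 0; rw [zero_mul])
  smul_add r x y := Subtype.ext (by
    show (x.1 + y.1) * G.emb r.unop = x.1 * G.emb r.unop + y.1 * G.emb r.unop
    rw [add_mul])
  add_smul r s x := Subtype.ext (by
    show x.1 * G.emb (r + s).unop = x.1 * G.emb r.unop + x.1 * G.emb s.unop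
    rw [unop_add, map_add, mul_add])
  zero_smul x := Subtype.ext (by
    show x.1 * G.emb (unop 0) = 0; rw [unop_zero, map_zero, mul_zero])

instance (G : GRing R A) (n : ℕ) : SMulCommClass R Rᵐᵒᵖ (G.Deg n) where
  smul_comm r s x := Subtype.ext (by
    show G.emb r * (x.1 * G.emb s.unop) = (G.emb r * x.1) * G.emb s.unop
    rw [mul_assoc])

@[simp] theorem GRing.degL_smul (G : GRing R A) (n : ℕ) (r : R) (x : G.Deg n) :
    (r • x).1 = G.emb r * x.1 := rfl

@[simp] theorem GRing.degR_smul (G : GRing R A) (n : ℕ) (s : Rᵐᵒᵖ) (x : G.Deg n) :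
    (s • x).1 = x.1 * G.emb s.unop := rfl

/-- The multiplication maps of a connected graded ring, on components. -/
def GRing.degMul (G : GRing R A) (p q : ℕ) :
    TensorR R (G.Deg p) (G.Deg q) →+ G.Deg (p + q) :=
  liftT₂ (fun x y => (⟨x.1 * y.1, G.mul_mem x.2 y.2⟩ : G.Deg (p + q)))
    (fun x x' y => Subtype.ext (add_mul x.1 x'.1 y.1))
    (fun x y y' => Subtype.ext (mul_add x.1 y.1 y'.1))
    (fun r x y => Subtype.ext (mul_assoc x.1 (G.emb r) y.1))

theorem GRing.degMul_lsmul (G : GRing R A) (p q : ℕ) (r : R)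
    (z : TensorR R (G.Deg p) (G.Deg q)) :
    G.degMul p q (r • z) = r • G.degMul p q z := by
  induction z using TensorR.ind with
  | h0 => simp
  | htp x y =>
      rw [lsm_tp]
      exact Subtype.ext (mul_assoc (G.emb r) x.1 y.1)
  | hadd u v hu hv => rw [smul_add, map_add, hu, hv, map_add, smul_add]

theorem GRing.degMul_rsmul (G : GRing R A) (p q : ℕ) (s : Rᵐᵒᵖ)
    (z : TensorR R (G.Deg p) (G.Deg q)) :
    G.degMul p q (s • z) = s • G.degMul p q z := by
  induction z using TensorR.ind with
  | h0 => simp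
  | htp x y =>
      rw [rsm_tp]
      exact Subtype.ext (mul_assoc x.1 y.1 (G.emb s.unop)).symm
  | hadd u v hu hv => rw [smul_add, map_add, hu, hv, map_add, smul_add]

variable {G : GRing R A} {M : Type} [AddCommGroup M] [Module A M]

/-- The homogeneous component of degree `d` of a graded module. -/
def GMod.Deg (gm : GMod G M) (d : ℕ) : Type := ↥(gm.deg d)

instance (gm : GMod G M) (d : ℕ) : AddCommGroup (gm.Deg d) :=
  inferInstanceAs (AddCommGroup ↥(gm.deg d))

instance (gm : GMod G M) (d : ℕ) : Module R (gm.Deg d) where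
  smul r x := ⟨G.emb r • x.1, by
    have := gm.smul_mem (G.emb_mem r) x.2; rwa [zero_add] at this⟩
  one_smul x := Subtype.ext (by show G.emb 1 • x.1 = x.1; rw [map_one, one_smul])
  mul_smul r s x := Subtype.ext (by
    show G.emb (r * s) • x.1 = G.emb r • (G.emb s • x.1); rw [map_mul, mul_smul])
  smul_zero r := Subtype.ext (by show G.emb r • (0 : M) = 0; rw [smul_zero])
  smul_add r x y := Subtype.ext (by
    show G.emb r • (x.1 + y.1) = G.emb r • x.1 + G.emb r • y.1; rw [smul_add])
  add_smul r s x := Subtype.ext (by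
    show G.emb (r + s) • x.1 = G.emb r • x.1 + G.emb s • x.1; rw [map_add, add_smul])
  zero_smul x := Subtype.ext (by show G.emb 0 • x.1 = 0; rw [map_zero, zero_smul])

@[simp] theorem GMod.degL_smul (gm : GMod G M) (d : ℕ) (r : R) (x : gm.Deg d) :
    (r • x).1 = G.emb r • x.1 := rfl

/-- The action maps of a graded module, on components. -/
def GMod.degAct (gm : GMod G M) (p d : ℕ) :
    TensorR R (G.Deg p) (gm.Deg d) →+ gm.Deg (p + d) :=
  liftT₂ (fun x y => (⟨x.1 • y.1, gm.smul_mem x.2 y.2⟩ : gm.Deg (p + d)))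
    (fun x x' y => Subtype.ext (add_smul x.1 x'.1 y.1))
    (fun x y y' => Subtype.ext (smul_add x.1 y.1 y'.1))
    (fun r x y => Subtype.ext (mul_smul x.1 (G.emb r) y.1))

/-- The bar-complex data of a connected graded ring, with coefficients in a
compatibly graded module. -/
def GMod.barData (gm : GMod G M) : BarData R where
  A := G.Deg
  N := gm.Deg
  μ := G.degMul
  μ_lsmul := G.degMul_lsmul
  μ_rsmul := G.degMul_rsmul
  σ := gm.degAct
  σ_lsmul p d r z := by
    induction z using TensorR.ind with
    | h0 => simp
    | htp x y =>
        rw [lsm_tp]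
        exact Subtype.ext (mul_smul (G.emb r) x.1 y.1)
    | hadd u v hu hv => rw [smul_add, map_add, hu, hv, map_add, smul_add]

end BarOfGRing
--CHUNK_B2_END

--CHUNK_B3_BEGIN
section TrivialCoefficients

variable (R : Type) [Ring R]

/-- `R`, viewed as a graded module concentrated in degree `0`. -/
@[reducible] def TrivN : ℕ → Type
  | 0 => R
  | _ + 1 => PUnit

instance : ∀ d, AddCommGroup (TrivN R d)
  | 0 => inferInstanceAs (AddCommGroup R)
  | _ + 1 => inferInstanceAs (AddCommGroup PUnit)

instance : ∀ d, Module R (TrivN R d)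
  | 0 => inferInstanceAs (Module R R)
  | _ + 1 => inferInstanceAs (Module R PUnit)

instance : ∀ d, Subsingleton (TrivN R (d + 1)) :=
  fun _ => inferInstanceAs (Subsingleton PUnit)

variable {R} {A : Type} [Ring A]

/-- The action of a connected graded ring on the trivial module `R = A/A₊`:
`A₊` acts by zero and `A_0 = R` by multiplication. -/
def GRing.trivAct (G : GRing R A) : ∀ p d, TensorR R (G.Deg p) (TrivN R d) →+ TrivN R (p + d)
  | 0, 0 =>
      liftT₂ (fun a x => G.aug a.1 * x)
        (fun a a' x => by
          show G.aug ((a + a').1) * x = G.aug a.1 * x + G.aug a'.1 * x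
          have h : (a + a').1 = a.1 + a'.1 := rfl
          rw [h, map_add, add_mul])
        (fun a x x' => by
          show G.aug a.1 * (x + x') = G.aug a.1 * x + G.aug a.1 * x'
          rw [mul_add])
        (fun r a x => by
          show G.aug ((op r • a).1) * x = G.aug a.1 * (r * x)
          have h : (op r • a).1 = a.1 * G.emb r := rfl
          rw [h, map_mul, G.aug_emb, mul_assoc])
  | _ + 1, 0 => 0
  | _, _ + 1 => 0

/-- The bar-complex data computing `Tor^A(R, R)`. -/
def GRing.trivBarData (G : GRing R A) : BarData R where
  A := G.Deg
  N := TrivN R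
  μ := G.degMul
  μ_lsmul := G.degMul_lsmul
  μ_rsmul := G.degMul_rsmul
  σ := G.trivAct
  σ_lsmul p d r z := by
    match p, d with
    | 0, 0 =>
        induction z using TensorR.ind with
        | h0 => simp
        | htp a x =>
            show G.aug ((r • a).1) * x = r • (G.aug a.1 * x)
            have h : (r • a).1 = G.emb r * a.1 := rfl
            rw [h, map_mul, G.aug_emb, smul_eq_mul, mul_assoc]
        | hadd u v hu hv => rw [smul_add, map_add, hu, hv, map_add, smul_add]
    | p + 1, 0 => exact Subsingleton.elim _ _
    | p, d + 1 => exact Subsingleton.elim _ _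

/-- The bigraded Tor groups `Tor^A_{n,m}(R, R)` of a connected graded `R`-ring. -/
def GRing.TorRR (G : GRing R A) (n m : ℕ) : Type := Tor G.trivBarData n m

instance (G : GRing R A) (n m : ℕ) : AddCommGroup (G.TorRR n m) :=
  inferInstanceAs (AddCommGroup (Tor G.trivBarData n m))

/-- The bigraded Tor groups `Tor^A_{n,m}(R, M)` with coefficients in a graded module. -/
def GMod.TorR {G : GRing R A} {M : Type} [AddCommGroup M] [Module A M]
    (gm : GMod G M) (n m : ℕ) : Type := Tor gm.barData n m

instance {G : GRing R A} {M : Type} [AddCommGroup M] [Module A M]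
    (gm : GMod G M) (n m : ℕ) : AddCommGroup (gm.TorR n m) :=
  inferInstanceAs (AddCommGroup (Tor gm.barData n m))

end TrivialCoefficients
--CHUNK_B3_END

--CHUNK_P_BEGIN
section Posets

variable (k : Type) [Field k] (P : Type) [PartialOrder P]

/-- `ρ` is a length function for the graded poset `P`: every interval `[x, y]`
contains a maximal chain (a saturated chain for the covering relation `⋖`), and
every maximal chain from `x` to `y` has the same length `ρ x y`. -/
structure LengthFn {P : Type} [PartialOrder P] (ρ : P → P → ℕ) : Prop where
  exists_chain : ∀ x y : P, x ≤ y → ∃ c : List P,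
    c.Chain' (· ⋖ ·) ∧ c.head? = some x ∧ c.getLast? = some y
  chain_length : ∀ (x y : P) (c : List P),
    c.Chain' (· ⋖ ·) → c.head? = some x → c.getLast? = some y →
    c.length = ρ x y + 1

/-- `A`, together with the family `e`, is (a copy of) the incidence algebra of the
finite poset `P` over the field `k`: the elements `e x y`, for `x ≤ y`, form a
`k`-basis of `A` and multiply by `e x y * e z w = δ_{y z} · e x w`; the identity
is `∑ₓ e x x`. -/
structure IncAlg [Fintype P] [DecidableEq P] (A : Type) [Ring A] [Algebra k A] where
  e : P → P → A
  e_not_le : ∀ x y : P, ¬ x ≤ y → e x y = 0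
  e_mul : ∀ x y z w : P, x ≤ y → z ≤ w →
    e x y * e z w = if y = z then e x w else 0
  indep : LinearIndependent k (fun p : {p : P × P // p.1 ≤ p.2} => e p.1.1 p.1.2)
  span_top : Submodule.span k
    (Set.range (fun p : {p : P × P // p.1 ≤ p.2} => e p.1.1 p.1.2)) = ⊤
  one_def : (1 : A) = ∑ x : P, e x x

variable {k P}

/-- The canonical structure of connected graded `R`-ring (`R = k^P`) on the
incidence algebra of a finite graded poset: `e x y` is homogeneous of degree
`l([x,y]) = ρ x y`, the degree-zero part is `R` embedded diagonally, and the
augmentation kills all `e x y` with `x ≠ y`. -/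
structure IncGrading [Fintype P] [DecidableEq P] {A : Type} [Ring A] [Algebra k A]
    (inc : IncAlg k P A) (ρ : P → P → ℕ) (G : GRing (P → k) A) : Prop where
  emb_eq : ∀ f : P → k, G.emb f = ∑ x : P, f x • inc.e x x
  deg_eq : ∀ d : ℕ, (G.deg d : Set A) =
    ↑(Submodule.span k {a : A | ∃ x y : P, x ≤ y ∧ ρ x y = d ∧ a = inc.e x y})
  aug_eq : ∀ x y : P, x ≤ y →
    G.aug (inc.e x y) = if x = y then Pi.single x (1 : k) else 0

end Posets
--CHUNK_P_END



section Statement8Aux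

/-! ### Pure index lemmas for the bar complex -/

theorem mIdx_snd_ge (i : ℕ) : ∀ (l : List ℕ) (d : ℕ), d ≤ (mIdx l d i).2 := by
  induction i with
  | zero =>
    rintro (_ | ⟨a, _ | ⟨b, l⟩⟩) d
    · exact le_refl _
    · simp only [mIdx_single]; omega
    · exact le_refl _
  | succ i ih =>
    rintro (_ | ⟨a, _ | ⟨b, l⟩⟩) d
    · exact le_refl _
    · simp only [mIdx_single]; omega
    · simpa only [mIdx_consₛ] using ih (b :: l) d

theorem mIdx_snd_of_lt (i : ℕ) : ∀ (l : List ℕ) (d : ℕ),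
    i + 1 < l.length → (mIdx l d i).2 = d := by
  induction i with
  | zero =>
    rintro (_ | ⟨a, _ | ⟨b, l⟩⟩) d h
    · simp at h
    · simp at h
    · rfl
  | succ i ih =>
    rintro (_ | ⟨a, _ | ⟨b, l⟩⟩) d h
    · simp at h
    · simp at h
    · simp only [mIdx_consₛ]
      exact ih (b :: l) d (by simp only [List.length_cons] at h ⊢; omega)

theorem K3_idx : ∀ (l : List ℕ) (c : ℕ), mIdx (l ++ [c]) 1 l.length = (l, c + 1) := by
  intro l
  induction l with
  | nil => intro c; rfl
  | cons a l ih =>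
    intro c
    cases l with
    | nil => rfl
    | cons b l2 =>
      show (a :: (mIdx ((b :: l2) ++ [c]) 1 (b :: l2).length).1,
          (mIdx ((b :: l2) ++ [c]) 1 (b :: l2).length).2) = (a :: b :: l2, c + 1)
      rw [ih c]

theorem K3_idx' {l : List ℕ} {i : ℕ} (hi : i = l.length) (c : ℕ) :
    mIdx (l ++ [c]) 1 i = (l, c + 1) := by subst hi; exact K3_idx l c

theorem KA_idx : ∀ (l : List ℕ) (i : ℕ), i < l.length → ∀ (c : ℕ),
    mIdx (l ++ [c]) 1 i = ((mIdx l (c + 1) i).1 ++ [(mIdx l (c + 1) i).2 - 1], 1) := by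
  intro l
  induction l with
  | nil => intro i hi; simp at hi
  | cons a l ih =>
    intro i hi c
    cases i with
    | zero =>
      cases l with
      | nil =>
        show ([a + c], 1) = ([] ++ [a + (c + 1) - 1], 1)
        have : a + (c + 1) - 1 = a + c := by omega
        rw [this, List.nil_append]
      | cons b l2 =>
        show ((a + b) :: (l2 ++ [c]), 1) = (((a + b) :: l2) ++ [(c + 1) - 1], 1)
        have : (c + 1) - 1 = c := by omega
        rw [this, List.cons_append]
    | succ i =>
      cases l with
      | nil => simp at hi
      | cons b l2 =>
        have hi' : i < (b :: l2).length := by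
          simp only [List.length_cons] at hi ⊢; omega
        show (a :: (mIdx ((b :: l2) ++ [c]) 1 i).1, (mIdx ((b :: l2) ++ [c]) 1 i).2)
            = ((a :: (mIdx (b :: l2) (c + 1) i).1) ++ [(mIdx (b :: l2) (c + 1) i).2 - 1], 1)
        rw [ih i hi' c, List.cons_append]

theorem mIdx_eta (l : List ℕ) (d i : ℕ) (hd : 1 ≤ d) :
    mIdx l d i = ((mIdx l d i).1, ((mIdx l d i).2 - 1) + 1) := by
  have h2 : (mIdx l d i).2 = ((mIdx l d i).2 - 1) + 1 := by
    have := mIdx_snd_ge i l d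
    omega
  exact Prod.ext_iff.mpr ⟨rfl, h2⟩

end Statement8Aux

section Statement8Setup

/-- All the data and hypotheses of Statement 8, bundled. -/
structure Setup : Type 1 where
  k : Type
  [instF : Field k]
  P : Type
  [instPO : PartialOrder P]
  [instFin : Fintype P]
  [instDE : DecidableEq P]
  ρ : P → P → ℕ
  hρ : LengthFn ρ
  t : P
  u : P
  hu : u ⋖ t
  B : Type
  [instRB : Ring B]
  [instAB : Algebra k B]
  incB : IncAlg k {x : P // x ≠ t} B
  GB : GRing ({x : P // x ≠ t} → k) B
  hGB : IncGrading incB (fun x y : {x : P // x ≠ t} => ρ ↑x ↑y) GB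
  V : Type
  [instAV : AddCommGroup V]
  [instMBV : Module B V]
  [instMkV : Module k V]
  [instTow : IsScalarTower k B V]
  vb : {x : P // x ≤ u} → V
  hvb_indep : LinearIndependent k vb
  hvb_span : Submodule.span k (Set.range vb) = ⊤
  hact : ∀ (x y : {x : P // x ≠ t}) (h : x ≤ y) (z : {x : P // x ≤ u}),
    incB.e x y • vb z =
      if hyz : (↑y : P) = ↑z then
        vb ⟨↑x, (Subtype.coe_le_coe.mpr h).trans ((le_of_eq hyz).trans z.2)⟩
      else 0
  gm : GMod GB V
  hgm : ∀ d : ℕ, (gm.deg d : Set V) =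
    ↑(Submodule.span k {w : V | ∃ z : {x : P // x ≤ u}, ρ ↑z t = d ∧ w = vb z})

attribute [instance] Setup.instF Setup.instPO Setup.instFin Setup.instDE Setup.instRB
  Setup.instAB Setup.instAV Setup.instMBV Setup.instMkV Setup.instTow

namespace Setup

variable (S : Setup)

/-- The base ring. -/
abbrev R : Type := {x : S.P // x ≠ S.t} → S.k

/-- The small poset. -/
abbrev Q : Type := {x : S.P // x ≠ S.t}

/-- The bar data of the coefficient module. -/
abbrev BD : BarData S.R := S.gm.barData

/-- The chains, indexed by pairs. -/
abbrev Ch (q : List ℕ × ℕ) : Type := Chain S.BD q.1 q.2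

theorem u_ne_t : S.u ≠ S.t := S.hu.lt.ne

/-- `u` as an element of `Q`. -/
def uQ : S.Q := ⟨S.u, S.u_ne_t⟩

/-- The generator `e_{u,t}` of the module `V`. -/
def vbu : S.V := S.vb ⟨S.u, le_refl S.u⟩

/-- An element `z ≤ u` of `P`, as an element of `Q`. -/
def zQ (z : {x : S.P // x ≤ S.u}) : S.Q :=
  ⟨z.1, fun h => absurd (h ▸ z.2) (not_le_of_gt S.hu.lt)⟩

/-! ### Length-function facts -/

theorem rho_self (z : S.P) : S.ρ z z = 0 := by
  have h := S.hρ.chain_length z z [z] (List.isChain_singleton z) rfl rfl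
  simpa using h.symm

theorem eq_of_rho_eq_zero {z w : S.P} (h : z ≤ w) (h0 : S.ρ z w = 0) : z = w := by
  obtain ⟨c, hc, hh, hl⟩ := S.hρ.exists_chain z w h
  have hlen := S.hρ.chain_length z w c hc hh hl
  rw [h0] at hlen
  obtain ⟨a, rfl⟩ := List.length_eq_one_iff.mp hlen
  simp only [List.head?_cons, Option.some.injEq] at hh
  simp only [List.getLast?_singleton, Option.some.injEq] at hl
  rw [← hh, ← hl]

theorem rho_succ {z : S.P} (hz : z ≤ S.u) : S.ρ z S.t = S.ρ z S.u + 1 := by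
  obtain ⟨c, hc, hh, hl⟩ := S.hρ.exists_chain z S.u hz
  have h1 := S.hρ.chain_length z S.u c hc hh hl
  have hcne : c ≠ [] := by rintro rfl; simp at hh
  have hc' : (c ++ [S.t]).Chain' (· ⋖ ·) := by
    show List.IsChain _ (c ++ [S.t])
    rw [List.isChain_append]
    refine ⟨hc, List.isChain_singleton _, ?_⟩
    intro x hx y hy
    rw [hl] at hx
    simp only [Option.mem_some_iff] at hx
    simp only [List.head?_cons, Option.mem_some_iff] at hy
    subst hx
    subst hy
    exact S.hu
  have h2 := S.hρ.chain_length z S.t (c ++ [S.t]) hc' ?_ ?_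
  · rw [List.length_append, List.length_singleton] at h2
    omega
  · rw [List.head?_append, hh]; rfl
  · exact List.getLast?_concat

theorem rho_zt_pos {z : S.P} (hz : z ≤ S.u) : 1 ≤ S.ρ z S.t := by
  rw [S.rho_succ hz]; omega

theorem rho_zt_one {z : S.P} (hz : z ≤ S.u) (h : S.ρ z S.t = 1) : z = S.u := by
  refine S.eq_of_rho_eq_zero hz ?_
  have := S.rho_succ hz
  omega

theorem rho_ut : S.ρ S.u S.t = 1 := by
  rw [S.rho_succ (le_refl S.u), S.rho_self]

theorem rho_zu {z : {x : S.P // x ≤ S.u}} {d : ℕ} (h : S.ρ z.1 S.t = d + 1) :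
    S.ρ z.1 S.u = d := by
  have := S.rho_succ z.2
  omega

/-! ### Algebra facts -/

theorem emb_const (c : S.k) : S.GB.emb (fun _ => c) = c • (1 : S.B) := by
  rw [S.hGB.emb_eq, S.incB.one_def, Finset.smul_sum]

theorem emb_single : S.GB.emb (Pi.single S.uQ (1 : S.k)) = S.incB.e S.uQ S.uQ := by
  rw [S.hGB.emb_eq]
  rw [Finset.sum_eq_single S.uQ]
  · rw [Pi.single_eq_same, one_smul]
  · intro b _ hb
    rw [Pi.single_eq_of_ne hb, zero_smul]
  · intro h
    exact absurd (Finset.mem_univ _) h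

theorem kB_smul_comm (c : S.k) (b : S.B) (w : S.V) : b • (c • w) = c • (b • w) := by
  rw [← smul_one_smul S.B c w, ← mul_smul, mul_smul_comm, mul_one, smul_assoc]

theorem deg_ksmul_mem {d : ℕ} (c : S.k) {x : S.B} (h : x ∈ S.GB.deg d) :
    c • x ∈ S.GB.deg d := by
  have h2 : S.GB.emb (fun _ => c) * x ∈ S.GB.deg (0 + d) :=
    S.GB.mul_mem (S.GB.emb_mem _) h
  rw [zero_add] at h2
  rwa [S.emb_const, smul_mul_assoc, one_mul] at h2

theorem gmdeg_ksmul_mem {d : ℕ} (c : S.k) {w : S.V} (h : w ∈ S.gm.deg d) :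
    c • w ∈ S.gm.deg d := by
  have h2 : S.GB.emb (fun _ => c) • w ∈ S.gm.deg (0 + d) :=
    S.gm.smul_mem (S.GB.emb_mem _) h
  rw [zero_add] at h2
  rwa [S.emb_const, smul_one_smul] at h2

theorem mem_deg_iff_span (d : ℕ) (x : S.B) :
    x ∈ S.GB.deg d ↔ x ∈ Submodule.span S.k
      {a : S.B | ∃ x y : S.Q, x ≤ y ∧ S.ρ ↑x ↑y = d ∧ a = S.incB.e x y} := by
  constructor
  · intro h
    have h' : x ∈ (S.GB.deg d : Set S.B) := h
    rwa [S.hGB.deg_eq d] at h'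
  · intro h
    have h' : x ∈ (S.GB.deg d : Set S.B) := by rw [S.hGB.deg_eq d]; exact h
    exact h'

theorem mem_gmdeg_iff_span (d : ℕ) (w : S.V) :
    w ∈ S.gm.deg d ↔ w ∈ Submodule.span S.k
      {w : S.V | ∃ z : {x : S.P // x ≤ S.u}, S.ρ ↑z S.t = d ∧ w = S.vb z} := by
  constructor
  · intro h
    have h' : w ∈ (S.gm.deg d : Set S.V) := h
    rwa [S.hgm d] at h'
  · intro h
    have h' : w ∈ (S.gm.deg d : Set S.V) := by rw [S.hgm d]; exact h
    exact h'

theorem deg_zero_eq_zero {w : S.V} (h : w ∈ S.gm.deg 0) : w = 0 := by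
  rw [S.mem_gmdeg_iff_span] at h
  have he : {w : S.V | ∃ z : {x : S.P // x ≤ S.u}, S.ρ ↑z S.t = 0 ∧ w = S.vb z} = ∅ := by
    ext w'
    simp only [Set.mem_setOf_eq, Set.mem_empty_iff_false, iff_false, not_exists]
    rintro z ⟨hz, -⟩
    have := S.rho_zt_pos z.2
    omega
  rw [he, Submodule.span_empty, Submodule.mem_bot] at h
  exact h

end Setup

end Statement8Setup

namespace Setup

variable (S : Setup)

/-! ### The splitting `β` -/

/-- The basis of `V` given by the `vb`. -/
def basisV : Module.Basis {x : S.P // x ≤ S.u} S.k S.V := Module.Basis.mk S.hvb_indep S.hvb_span.ge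

/-- The `k`-linear splitting `V → B`, `e_{z,t} ↦ e_{z,u}`. -/
def βV : S.V →ₗ[S.k] S.B := S.basisV.constr ℕ fun z => S.incB.e (S.zQ z) S.uQ

theorem betaV_vb (z : {x : S.P // x ≤ S.u}) :
    S.βV (S.vb z) = S.incB.e (S.zQ z) S.uQ := by
  have h : S.vb z = S.basisV z := (Module.Basis.mk_apply S.hvb_indep S.hvb_span.ge z).symm
  rw [h, βV, Module.Basis.constr_basis]

theorem zQ_le (z : {x : S.P // x ≤ S.u}) : S.zQ z ≤ S.uQ := z.2

theorem beta_mul {p : ℕ} {a : S.B} (ha : a ∈ S.GB.deg p) (w : S.V) :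
    S.βV (a • w) = a * S.βV w := by
  rw [S.mem_deg_iff_span] at ha
  induction ha using Submodule.span_induction with
  | mem b hb =>
    obtain ⟨x, y, hxy, -, rfl⟩ := hb
    have hw : w ∈ Submodule.span S.k (Set.range S.vb) := by
      rw [S.hvb_span]; trivial
    induction hw using Submodule.span_induction with
    | mem w hw =>
      obtain ⟨z, rfl⟩ := hw
      rw [S.hact x y hxy z]
      by_cases hyz : (↑y : S.P) = ↑z
      · rw [dif_pos hyz, S.betaV_vb, S.betaV_vb,
          S.incB.e_mul x y (S.zQ z) S.uQ hxy (S.zQ_le z)]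
        rw [if_pos (Subtype.ext hyz)]
        exact congrArg (fun q => S.incB.e q S.uQ) (Subtype.ext rfl)
      · rw [dif_neg hyz, map_zero, S.betaV_vb,
          S.incB.e_mul x y (S.zQ z) S.uQ hxy (S.zQ_le z)]
        rw [if_neg (fun h => hyz (congrArg Subtype.val h))]
    | zero => simp
    | add w1 w2 h1 h2 ih1 ih2 => rw [smul_add, map_add, map_add, ih1, ih2, mul_add]
    | smul c w1 h1 ih =>
      rw [S.kB_smul_comm, map_smul, ih, map_smul, mul_smul_comm]
  | zero => rw [zero_smul, map_zero, zero_mul]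
  | add a b ha hb iha ihb => rw [add_smul, map_add, iha, ihb, add_mul]
  | smul c b hb ih => rw [smul_assoc, map_smul, ih, smul_mul_assoc]

theorem beta_mem {d : ℕ} {w : S.V} (hw : w ∈ S.gm.deg (d + 1)) :
    S.βV w ∈ S.GB.deg d := by
  rw [S.mem_gmdeg_iff_span] at hw
  induction hw using Submodule.span_induction with
  | mem w hw =>
    obtain ⟨z, hz, rfl⟩ := hw
    rw [S.betaV_vb, S.mem_deg_iff_span]
    exact Submodule.subset_span ⟨S.zQ z, S.uQ, S.zQ_le z, S.rho_zu hz, rfl⟩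
  | zero => rw [map_zero]; exact zero_mem _
  | add w1 w2 h1 h2 ih1 ih2 => rw [map_add]; exact add_mem ih1 ih2
  | smul c w1 h1 ih => rw [map_smul]; exact S.deg_ksmul_mem c ih

theorem beta_smul_vbu {d : ℕ} {w : S.V} (hw : w ∈ S.gm.deg (d + 1)) :
    S.βV w • S.vbu = w := by
  rw [S.mem_gmdeg_iff_span] at hw
  induction hw using Submodule.span_induction with
  | mem w hw =>
    obtain ⟨z, hz, rfl⟩ := hw
    rw [S.betaV_vb, vbu, S.hact (S.zQ z) S.uQ (S.zQ_le z) ⟨S.u, le_refl S.u⟩]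
    have hcond : (↑S.uQ : S.P) = ↑(⟨S.u, le_refl S.u⟩ : {x : S.P // x ≤ S.u}) := rfl
    rw [dif_pos hcond]
    exact congrArg S.vb (Subtype.ext rfl)
  | zero => rw [map_zero, zero_smul]
  | add w1 w2 h1 h2 ih1 ih2 => rw [map_add, add_smul, ih1, ih2]
  | smul c w1 h1 ih => rw [map_smul, smul_assoc, ih]

/-! ### Bundled versions -/

/-- The degree-one element `e_{u,t}` of the graded module. -/
def v₁ : S.gm.Deg 1 :=
  ⟨S.vbu, by
    rw [← SetLike.mem_coe, S.hgm 1]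
    exact Submodule.subset_span ⟨⟨S.u, le_refl S.u⟩, S.rho_ut, rfl⟩⟩

/-- The bundled splitting, on homogeneous components. -/
def βb (d : ℕ) : S.gm.Deg (d + 1) →ₗ[S.R] S.GB.Deg d where
  toFun w := ⟨S.βV w.1, S.beta_mem w.2⟩
  map_add' w w' := Subtype.ext (map_add S.βV w.1 w'.1)
  map_smul' r w := Subtype.ext (by
    show S.βV (S.GB.emb r • w.1) = S.GB.emb r * S.βV w.1
    exact S.beta_mul (S.GB.emb_mem r) w.1)

theorem sig_beta (d : ℕ) (w : S.gm.Deg (d + 1)) :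
    S.gm.degAct d 1 (tp (S.βb d w) S.v₁) = w :=
  Subtype.ext (S.beta_smul_vbu w.2)

/-! ### The degree-one component -/

theorem n1_exists (w : S.gm.Deg 1) : ∃ c : S.k, w = (fun _ => c : S.R) • S.v₁ := by
  have hw : w.1 ∈ Submodule.span S.k
      {v : S.V | ∃ z : {x : S.P // x ≤ S.u}, S.ρ ↑z S.t = 1 ∧ v = S.vb z} :=
    (S.mem_gmdeg_iff_span 1 w.1).mp w.2
  have hw2 : w.1 ∈ Submodule.span S.k {S.vbu} := by
    refine Submodule.span_le.mpr ?_ hw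
    rintro v ⟨z, hz, rfl⟩
    have hz' : z = ⟨S.u, le_refl S.u⟩ := Subtype.ext (S.rho_zt_one z.2 hz)
    rw [hz']
    exact Submodule.subset_span rfl
  obtain ⟨c, hc⟩ := Submodule.mem_span_singleton.mp hw2
  refine ⟨c, Subtype.ext ?_⟩
  show w.1 = S.GB.emb (fun _ => c) • S.vbu
  rw [S.emb_const, smul_one_smul]
  exact hc.symm

theorem constR_smul_eq (c : S.k) (p : ℕ) (a : S.GB.Deg p) :
    ((fun _ => c : S.R) • a) = (op (fun _ => c : S.R)) • a := by
  refine Subtype.ext ?_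
  show S.GB.emb (fun _ => c) * a.1 = a.1 * S.GB.emb (fun _ => c)
  rw [S.emb_const, smul_mul_assoc, one_mul, mul_smul_comm, mul_one]

/-- The characteristic function of `u`. -/
def δu : S.R := Pi.single S.uQ 1

theorem delta_smul_v1 : S.δu • S.v₁ = S.v₁ := by
  refine Subtype.ext ?_
  show S.GB.emb S.δu • S.vbu = S.vbu
  rw [δu, S.emb_single, vbu, S.hact S.uQ S.uQ (le_refl _) ⟨S.u, le_refl S.u⟩]
  have hcond : (↑S.uQ : S.P) = ↑(⟨S.u, le_refl S.u⟩ : {x : S.P // x ≤ S.u}) := rfl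
  rw [dif_pos hcond]
  exact congrArg S.vb (Subtype.ext rfl)

theorem op_delta_smul (p : ℕ) (a : S.GB.Deg p) :
    ((op S.δu • a : S.GB.Deg p)).1 = a.1 * S.incB.e S.uQ S.uQ := by
  show a.1 * S.GB.emb S.δu = _
  rw [δu, S.emb_single]

theorem degAct_lsmul (p d : ℕ) (r : S.R) (z : TensorR S.R (S.GB.Deg p) (S.gm.Deg d)) :
    S.gm.degAct p d (r • z) = r • S.gm.degAct p d z :=
  S.gm.barData.σ_lsmul p d r z

/-- The balance identity: every element of `A_g ⊗ N_1` is of the form `β(w) ⊗ v₁`. -/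
theorem bal (g : ℕ) (x : TensorR S.R (S.GB.Deg g) (S.gm.Deg 1)) :
    tp (S.βb g (S.gm.degAct g 1 x)) S.v₁ = x := by
  induction x using TensorR.ind with
  | h0 => rw [map_zero, map_zero, tp_zero_left]
  | hadd x y hx hy => rw [map_add, map_add, tp_add_left, hx, hy]
  | htp a w =>
    obtain ⟨c, rfl⟩ := S.n1_exists w
    have h1 : tp (R := S.R) a ((fun _ => c : S.R) • S.v₁)
        = (fun _ => c : S.R) • tp a S.v₁ := by
      rw [← tp_balance, ← S.constR_smul_eq, lsm_tp]
    rw [h1, S.degAct_lsmul, map_smul, lsm_tp]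
    have h3 : S.βb g (S.gm.degAct g 1 (tp a S.v₁)) = op S.δu • a := by
      refine Subtype.ext ?_
      show S.βV (a.1 • S.vbu) = a.1 * S.GB.emb S.δu
      rw [S.beta_mul a.2 S.vbu, δu, S.emb_single]
      congr 1
      rw [show S.vbu = S.vb ⟨S.u, le_refl S.u⟩ from rfl, S.betaV_vb]
      exact congrArg (fun q => S.incB.e q S.uQ) (Subtype.ext rfl)
    rw [h3, smul_comm, tp_balance, S.delta_smul_v1]

end Setup

namespace Setup

variable (S : Setup)

/-! ### The homotopy on chains -/

instance instChAcg (q : List ℕ × ℕ) : AddCommGroup (S.Ch q) :=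
  inferInstanceAs (AddCommGroup (Chain S.BD q.1 q.2))

/-- The chain-level homotopy
`A_{a₁} ⊗ ⋯ ⊗ A_{aₖ} ⊗ N_{c+1} → A_{a₁} ⊗ ⋯ ⊗ A_{aₖ} ⊗ A_c ⊗ N_1`. -/
def hC : (l : List ℕ) → (c : ℕ) → (Chain S.BD l (c + 1) →ₗ[S.R] Chain S.BD (l ++ [c]) 1)
  | [], c =>
    { toFun := fun w => tp (S.βb c w) S.v₁
      map_add' := fun w w' => by
        exact (congrArg (fun x : S.GB.Deg c => tp (R := S.R) x S.v₁) (map_add (S.βb c) w w')).trans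
          (tp_add_left _ _ _)
      map_smul' := fun r w => by
        exact (congrArg (fun x : S.GB.Deg c => tp (R := S.R) x S.v₁) (map_smul (S.βb c) r w)).trans
          (lsm_tp _ _ _).symm }
  | a :: l, c => lmapL (hC l c)

theorem chain_eq_zero : ∀ (l : List ℕ) (x : Chain S.BD l 0), x = 0 := by
  intro l
  induction l with
  | nil =>
    intro x
    exact Subtype.ext (S.deg_zero_eq_zero x.2)
  | cons a l ih =>
    intro x
    induction x using TensorR.ind with
    | h0 => rfl
    | htp m y => rw [ih y]; exact tp_zero_right _
    | hadd u v hu hv => rw [hu, hv]; exact add_zero _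

/-! ### Cast helpers -/

theorem fcast_tp {a : ℕ} {l l' : List ℕ} {d d' : ℕ}
    (h : ((l, d) : List ℕ × ℕ) = (l', d'))
    (h2 : ((a :: l, d) : List ℕ × ℕ) = (a :: l', d'))
    (mm : S.GB.Deg a) (x : S.Ch (l, d)) :
    fcast S.Ch h2 (tp (R := S.R) mm x) = tp mm (fcast S.Ch h x) := by
  have hl : l = l' := congrArg Prod.fst h
  have hd : d = d' := congrArg Prod.snd h
  subst hl; subst hd
  rfl

theorem of_congr {n m : ℕ} {p q : BIdx n m} (h : p.1 = q.1)
    {x : Chain S.BD p.1.1 p.1.2} {y : Chain S.BD q.1.1 q.1.2}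
    (hxy : fcast S.Ch h x = y) :
    DirectSum.of (fun r : BIdx n m => Chain S.BD r.1.1 r.1.2) p x
      = DirectSum.of (fun r : BIdx n m => Chain S.BD r.1.1 r.1.2) q y := by
  have hpq : p = q := Subtype.ext h
  subst hpq
  rw [← hxy]
  rfl

/-- `mh` commutes with maps on the remaining factors. -/
theorem mh_lmapL (a b : ℕ) {X Y : Type} [AddCommGroup X] [Module S.R X]
    [AddCommGroup Y] [Module S.R Y] (g : X →ₗ[S.R] Y)
    (w : TensorR S.R (S.BD.A a) (TensorR S.R (S.BD.A b) X)) :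
    mh a b Y (lmapL (lmapL g) w) = lmapL g (mh a b X w) := by
  induction w using TensorR.ind with
  | h0 => rw [map_zero, map_zero, map_zero, map_zero]
  | hadd u v hu hv => rw [map_add, map_add, map_add, map_add, hu, hv]
  | htp m y =>
    induction y using TensorR.ind with
    | h0 => rw [tp_zero_right, map_zero, map_zero, map_zero, map_zero]
    | hadd u v hu hv =>
      rw [tp_add_right, map_add, map_add, map_add, map_add, hu, hv]
    | htp n z =>
      rw [lmapL_tp, lmapL_tp, mh_tp, mh_tp, lmapL_tp]

/-! ### Interaction of the homotopy with the bar differential -/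

example (a c : ℕ) (mm : S.GB.Deg a) (y : Chain S.BD [] (c + 1)) :
    mMap S.BD ([a] ++ [c]) 1 ([a].length) (S.hC [a] c (tp mm y))
      = tp (R := S.R) mm (mMap S.BD ([] ++ [c]) 1 0 (S.hC [] c y)) := rfl

example (g : ℕ) (y' : (chainB S.BD (List.append [] [g]) 1).T) :
    Chain S.BD ([] ++ [g]) 1 := y'

example (g : ℕ) (y' : (chainB S.BD (List.append [] [g]) 1).T) :
    Chain S.BD [g] 1 := y'

example (g : ℕ) (y' : TensorR S.R (S.GB.Deg g) (S.gm.Deg 1)) :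
    Chain S.BD ([] ++ [g]) 1 := y'

/-- Merging the added factor back into the coefficients recovers the original chain. -/
theorem K3_map : ∀ (l : List ℕ) (c : ℕ) (x : Chain S.BD l (c + 1)),
    fcast S.Ch (K3_idx l c) (mMap S.BD (l ++ [c]) 1 l.length (S.hC l c x)) = x := by
  intro l
  induction l with
  | nil =>
    intro c x
    exact S.sig_beta c x
  | cons a l ih =>
    intro c x
    cases l with
    | nil =>
      induction x using TensorR.ind with
      | h0 => erw [map_zero]; rfl
      | hadd u v hu hv => erw [map_add, map_add, map_add]; rw [hu, hv]; rfl
      | htp mm y =>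
        exact (S.fcast_tp (K3_idx [] c) (K3_idx [a] c) mm
            (mMap S.BD ([] ++ [c]) 1 ([] : List ℕ).length (S.hC [] c y))).trans
          (congrArg (fun z => tp (R := S.R) mm z) (ih c y))
    | cons b l2 =>
      induction x using TensorR.ind with
      | h0 => erw [map_zero]; rfl
      | hadd u v hu hv => erw [map_add, map_add, map_add]; rw [hu, hv]; rfl
      | htp mm y =>
        exact (S.fcast_tp (K3_idx (b :: l2) c) (K3_idx (a :: b :: l2) c) mm
            (mMap S.BD ((b :: l2) ++ [c]) 1 (b :: l2).length (S.hC (b :: l2) c y))).trans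
          (congrArg (fun z => tp (R := S.R) mm z) (ih c y))

theorem K3_map' {l : List ℕ} {i : ℕ} (hi : i = l.length) (c : ℕ)
    (x : Chain S.BD l (c + 1)) :
    fcast S.Ch (K3_idx' hi c) (mMap S.BD (l ++ [c]) 1 i (S.hC l c x)) = x := by
  subst hi; exact S.K3_map l c x

/-- The homotopy splits the final merge: `hC ∘ (last merge) = id` on `(l ++ [g], 1)`. -/
theorem K4_map : ∀ (l : List ℕ) (g : ℕ) (y : Chain S.BD (l ++ [g]) 1),
    S.hC l g (fcast S.Ch (K3_idx l g) (mMap S.BD (l ++ [g]) 1 l.length y)) = y := by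
  intro l
  induction l with
  | nil =>
    intro g y
    exact S.bal g y
  | cons a l ih =>
    intro g y
    cases l with
    | nil =>
      induction y using TensorR.ind with
      | h0 => erw [map_zero]; rfl
      | hadd u v hu hv => erw [map_add, map_add]; exact congrArg₂ (fun x y : Chain S.BD ([a] ++ [g]) 1 => x + y) hu hv
      | htp mm y' =>
        let y2 : Chain S.BD ([] ++ [g]) 1 := y'
        exact (congrArg (fun z => lmapL (S.hC [] g) z)
            (S.fcast_tp (K3_idx [] g) (K3_idx [a] g) mm
              (mMap S.BD ([] ++ [g]) 1 ([] : List ℕ).length y2))).trans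
          (congrArg (fun z => tp (R := S.R) mm z) (ih g y2))
    | cons b l2 =>
      induction y using TensorR.ind with
      | h0 => erw [map_zero, map_zero]; rfl
      | hadd u v hu hv => erw [map_add, map_add, map_add]; rw [hu, hv]; rfl
      | htp mm y' =>
        exact (congrArg (fun z => lmapL (S.hC (b :: l2) g) z)
            (S.fcast_tp (K3_idx (b :: l2) g) (K3_idx (a :: b :: l2) g) mm
              (mMap S.BD ((b :: l2) ++ [g]) 1 (b :: l2).length y'))).trans
          (congrArg (fun z => tp (R := S.R) mm z) (ih g y'))

theorem K4_map' {l : List ℕ} {i : ℕ} (hi : i = l.length) (g : ℕ)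
    (y : Chain S.BD (l ++ [g]) 1) :
    S.hC l g (fcast S.Ch (K3_idx' hi g) (mMap S.BD (l ++ [g]) 1 i y)) = y := by
  subst hi; exact S.K4_map l g y

/-- The key commutation: merges below the top commute with the homotopy. -/
theorem KA_map : ∀ (l : List ℕ) (i : ℕ) (hi : i < l.length) (c : ℕ)
    (x : Chain S.BD l (c + 1)),
    fcast S.Ch (KA_idx l i hi c) (mMap S.BD (l ++ [c]) 1 i (S.hC l c x))
      = S.hC (mIdx l (c + 1) i).1 ((mIdx l (c + 1) i).2 - 1)
          (fcast S.Ch (mIdx_eta l (c + 1) i (by omega)) (mMap S.BD l (c + 1) i x)) := by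
  intro l
  induction l with
  | nil => intro i hi; simp at hi
  | cons a l ih =>
    intro i hi c x
    cases i with
    | zero =>
      cases l with
      | nil =>
        induction x using TensorR.ind with
        | h0 => erw [map_zero, map_zero]
        | hadd u v hu hv => erw [map_add, map_add, map_add, map_add, map_add]; rw [hu, hv]; rfl
        | htp mm w =>
          have hfc : ∀ z, fcast S.Ch (KA_idx [a] 0 hi c) z = z := fun _ => rfl
          have key : S.GB.degMul a c (tp mm (S.βb c w))
              = S.βb (a + c) (S.gm.degAct a (c + 1) (tp mm w)) :=
            Subtype.ext (S.beta_mul mm.2 w.1).symm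
          exact (hfc _).trans (congrArg (fun z => tp (R := S.R) z S.v₁) key)
      | cons b l2 =>
        have hfc : ∀ z, fcast S.Ch (KA_idx (a :: b :: l2) 0 hi c) z = z := fun _ => rfl
        exact (hfc _).trans (S.mh_lmapL a b (S.hC l2 c) x)
    | succ i =>
      cases l with
      | nil => simp at hi
      | cons b l2 =>
        have hi' : i < (b :: l2).length := by
          simp only [List.length_cons] at hi ⊢; omega
        induction x using TensorR.ind with
        | h0 => erw [map_zero, map_zero, map_zero]
        | hadd u v hu hv => erw [map_add, map_add, map_add, map_add, map_add, map_add]; rw [hu, hv]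
        | htp mm y =>
          have e1 := S.fcast_tp (KA_idx (b :: l2) i hi' c)
            (KA_idx (a :: b :: l2) (i + 1) hi c) mm
            (mMap S.BD ((b :: l2) ++ [c]) 1 i (S.hC (b :: l2) c y))
          have e2 := congrArg (fun z => tp (R := S.R) mm z) (ih i hi' c y)
          have e3 := S.fcast_tp (mIdx_eta (b :: l2) (c + 1) i (by omega))
            (mIdx_eta (a :: b :: l2) (c + 1) (i + 1) (by omega)) mm
            (mMap S.BD (b :: l2) (c + 1) i y)
          exact (e1.trans e2).trans (congrArg (fun z =>
            lmapL (S.hC (mIdx (b :: l2) (c + 1) i).1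
              ((mIdx (b :: l2) (c + 1) i).2 - 1)) z) e3).symm

end Setup

theorem BIdx_eta {n m : ℕ} (p : BIdx n m) (h : 1 ≤ p.1.2) :
    p.1 = (p.1.1, (p.1.2 - 1) + 1) := by
  have h2 : p.1.2 = (p.1.2 - 1) + 1 := by omega
  exact Prod.ext_iff.mpr ⟨rfl, h2⟩

/-- The index of the image of a bar chain under the homotopy. -/
def hIdx {n m : ℕ} (p : BIdx n m) (h : 2 ≤ p.1.2) : BIdx (n + 1) m :=
  ⟨(p.1.1 ++ [p.1.2 - 1], 1), by
    obtain ⟨h1, h2, h3⟩ := p.2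
    refine ⟨?_, ?_, ?_⟩
    · rw [List.length_append, h1, List.length_singleton]
    · rw [List.sum_append, List.sum_singleton]
      omega
    · intro a ha
      rcases List.mem_append.mp ha with ha | ha
      · exact h3 a ha
      · rw [List.mem_singleton] at ha
        omega⟩

namespace Setup

variable (S : Setup)

theorem hC_cast {qp : List ℕ × ℕ} {l₀ : List ℕ} {g : ℕ} (hq : qp = (l₀, g + 1))
    (pe : qp = (qp.1, (qp.2 - 1) + 1))
    (he : ((qp.1 ++ [qp.2 - 1], 1) : List ℕ × ℕ) = (l₀ ++ [g], 1))
    (z : S.Ch qp) :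
    fcast S.Ch he (S.hC qp.1 (qp.2 - 1) (fcast S.Ch pe z)) = S.hC l₀ g (fcast S.Ch hq z) := by
  subst hq
  rfl

/-- The homotopy, on the bar complex. -/
def Hmap (n m : ℕ) : Bar S.BD n m →+ Bar S.BD (n + 1) m :=
  DirectSum.toAddMonoid fun p =>
    if h : 2 ≤ p.1.2 then
      (-1 : ℤ) ^ n •
        ((DirectSum.of (fun q : BIdx (n + 1) m => Chain S.BD q.1.1 q.1.2) (hIdx p h)).comp
          ((S.hC p.1.1 (p.1.2 - 1)).toAddMonoidHom.comp
            (fcast S.Ch (BIdx_eta p (le_trans one_le_two h))).toAddMonoidHom))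
    else 0

theorem Hmap_of {n m : ℕ} (p : BIdx n m) (h : 2 ≤ p.1.2) (x : Chain S.BD p.1.1 p.1.2) :
    S.Hmap n m (DirectSum.of (fun q : BIdx n m => Chain S.BD q.1.1 q.1.2) p x)
      = (-1 : ℤ) ^ n •
        DirectSum.of (fun q : BIdx (n + 1) m => Chain S.BD q.1.1 q.1.2) (hIdx p h)
          (S.hC p.1.1 (p.1.2 - 1) (fcast S.Ch (BIdx_eta p (le_trans one_le_two h)) x)) := by
  unfold Hmap
  erw [DirectSum.toAddMonoid_of]
  erw [dif_pos h]
  rfl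

theorem Hmap_of_small {n m : ℕ} (p : BIdx n m) (h : p.1.2 < 2)
    (x : Chain S.BD p.1.1 p.1.2) :
    S.Hmap n m (DirectSum.of (fun q : BIdx n m => Chain S.BD q.1.1 q.1.2) p x) = 0 := by
  unfold Hmap
  erw [DirectSum.toAddMonoid_of]
  erw [dif_neg (show ¬ 2 ≤ p.1.2 by omega)]
  rfl

end Setup

theorem dBar_of {R : Type} [Ring R] (B : BarData R) (n m : ℕ) (p : BIdx (n + 1) m)
    (x : Chain B p.1.1 p.1.2) :
    dBar B n m (DirectSum.of (fun q : BIdx (n + 1) m => Chain B q.1.1 q.1.2) p x)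
      = ∑ i ∈ Finset.range (n + 1), (-1 : ℤ) ^ i •
          DirectSum.of (fun q : BIdx n m => Chain B q.1.1 q.1.2) (mBIdx n m p i)
            (mMap B p.1.1 p.1.2 i x) := by
  unfold dBar
  erw [DirectSum.toAddMonoid_of]
  erw [AddMonoidHom.finset_sum_apply]
  refine Finset.sum_congr rfl fun i _ => rfl

namespace Setup

variable (S : Setup)

theorem bar_zero_ds {R : Type} [Ring R] (B : BarData R) (n m : ℕ) :
    (0 : ⨁ (p : BIdx n m), Chain B p.1.1 p.1.2) = (0 : Bar B n m) := rfl

theorem homotopy (n m : ℕ) (x : Bar S.BD (n + 1) m) :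
    dBar S.BD (n + 1) m (S.Hmap (n + 1) m x) + S.Hmap n m (dBar S.BD n m x) = x := by
  induction x using DirectSum.induction_on with
  | zero => simp [bar_zero_ds]
  | add a b ha hb =>
    have e1 : S.Hmap (n + 1) m (a + b) = S.Hmap (n + 1) m a + S.Hmap (n + 1) m b :=
      map_add _ a b
    have e2 : dBar S.BD n m (a + b) = dBar S.BD n m a + dBar S.BD n m b := map_add _ a b
    rw [e1, e2, map_add, map_add, add_add_add_comm]
    exact congrArg₂ (fun x y : Bar S.BD (n + 1) m => x + y) ha hb
  | of p x₀ =>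
    obtain ⟨⟨l, d⟩, hp⟩ := p
    match d, hp, x₀ with
    | 0, hp, x₀ =>
      rw [S.chain_eq_zero l x₀]
      simp only [map_zero, bar_zero_ds, add_zero]
    | 1, hp, x₀ =>
      have hlen := hp.1
      obtain ⟨l₀, g, rfl⟩ : ∃ l₀ g, l = l₀ ++ [g] := by
        rcases List.eq_nil_or_concat l with h | ⟨L, b, h⟩
        · rw [h] at hlen; simp at hlen
        · exact ⟨L, b, by rw [h, List.concat_eq_append]⟩
      have hn : l₀.length = n := by
        rw [List.length_append, List.length_singleton] at hlen; omega
      subst hn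
      have hg : 1 ≤ g := by
        have := hp.2.2 g (by simp)
        omega
      rw [S.Hmap_of_small ⟨(l₀ ++ [g], 1), hp⟩ one_lt_two, map_zero, zero_add]
      erw [dBar_of, map_sum, Finset.sum_range_succ]
      have hz : ∀ i ∈ Finset.range l₀.length,
          S.Hmap l₀.length m ((-1 : ℤ) ^ i •
            DirectSum.of (fun q : BIdx l₀.length m => Chain S.BD q.1.1 q.1.2)
              (mBIdx l₀.length m ⟨(l₀ ++ [g], 1), hp⟩ i)
              (mMap S.BD (l₀ ++ [g]) 1 i x₀)) = 0 := by
        intro i hi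
        have hsmall : (mBIdx l₀.length m ⟨(l₀ ++ [g], 1), hp⟩ i).1.2 < 2 := by
          show (mIdx (l₀ ++ [g]) 1 i).2 < 2
          rw [mIdx_snd_of_lt i (l₀ ++ [g]) 1 (by
            rw [List.length_append, List.length_singleton]
            have := Finset.mem_range.mp hi
            omega)]
          omega
        erw [map_zsmul, S.Hmap_of_small _ hsmall, smul_zero]
      rw [Finset.sum_congr rfl hz, Finset.sum_const_zero, zero_add]
      have hq1 : (mBIdx l₀.length m ⟨(l₀ ++ [g], 1), hp⟩ l₀.length).1 = (l₀, g + 1) :=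
        K3_idx l₀ g
      have hq2 : 2 ≤ (mBIdx l₀.length m ⟨(l₀ ++ [g], 1), hp⟩ l₀.length).1.2 := by
        rw [hq1]; omega
      erw [map_zsmul, S.Hmap_of (mBIdx l₀.length m ⟨(l₀ ++ [g], 1), hp⟩ l₀.length) hq2,
        smul_smul, ← pow_add, Even.neg_one_pow ⟨l₀.length, rfl⟩, one_smul]
      have hidx : (hIdx (mBIdx l₀.length m ⟨(l₀ ++ [g], 1), hp⟩ l₀.length) hq2).1
          = ((l₀ ++ [g], 1) : List ℕ × ℕ) := by
        show ((mBIdx l₀.length m ⟨(l₀ ++ [g], 1), hp⟩ l₀.length).1.1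
          ++ [(mBIdx l₀.length m ⟨(l₀ ++ [g], 1), hp⟩ l₀.length).1.2 - 1], 1)
          = ((l₀ ++ [g], 1) : List ℕ × ℕ)
        rw [hq1]
        rfl
      refine S.of_congr hidx ?_
      exact (S.hC_cast hq1
        (BIdx_eta (mBIdx l₀.length m ⟨(l₀ ++ [g], 1), hp⟩ l₀.length)
          (le_trans one_le_two hq2))
        hidx (mMap S.BD (l₀ ++ [g]) 1 l₀.length x₀)).trans (S.K4_map' rfl g x₀)
    | (c + 1 + 1), hp, x₀ =>
      have hl : l.length = n + 1 := hp.1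
      have h2 : 2 ≤ (⟨(l, c + 1 + 1), hp⟩ : BIdx (n + 1) m).1.2 := by
        show 2 ≤ c + 1 + 1; omega
      rw [S.Hmap_of ⟨(l, c + 1 + 1), hp⟩ h2]
      erw [map_zsmul, dBar_of, Finset.smul_sum (N := Bar S.BD (n + 1) m),
        dBar_of, map_sum, Finset.sum_range_succ]
      have hcancel : ∀ i ∈ Finset.range (n + 1),
          (-1 : ℤ) ^ (n + 1) • ((-1 : ℤ) ^ i •
            DirectSum.of (fun q : BIdx (n + 1) m => Chain S.BD q.1.1 q.1.2)
              (mBIdx (n + 1) m (hIdx ⟨(l, c + 1 + 1), hp⟩ h2) i)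
              (mMap S.BD (hIdx ⟨(l, c + 1 + 1), hp⟩ h2).1.1
                (hIdx ⟨(l, c + 1 + 1), hp⟩ h2).1.2 i
                (S.hC (⟨(l, c + 1 + 1), hp⟩ : BIdx (n + 1) m).1.1
                  ((⟨(l, c + 1 + 1), hp⟩ : BIdx (n + 1) m).1.2 - 1)
                  (fcast S.Ch (BIdx_eta ⟨(l, c + 1 + 1), hp⟩ (le_trans one_le_two h2)) x₀))))
          = - S.Hmap n m ((-1 : ℤ) ^ i •
              DirectSum.of (fun q : BIdx n m => Chain S.BD q.1.1 q.1.2)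
                (mBIdx n m ⟨(l, c + 1 + 1), hp⟩ i)
                (mMap S.BD (⟨(l, c + 1 + 1), hp⟩ : BIdx (n + 1) m).1.1
                  (⟨(l, c + 1 + 1), hp⟩ : BIdx (n + 1) m).1.2 i x₀)) := by
        intro i hi
        have hi' : i < l.length := by
          rw [hl]
          exact Finset.mem_range.mp hi
        have hs : 2 ≤ (mBIdx n m ⟨(l, c + 1 + 1), hp⟩ i).1.2 := by
          show 2 ≤ (mIdx l (c + 1 + 1) i).2
          have := mIdx_snd_ge i l (c + 1 + 1)
          omega
        erw [map_zsmul, S.Hmap_of (mBIdx n m ⟨(l, c + 1 + 1), hp⟩ i) hs]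
        have hE : DirectSum.of (fun q : BIdx (n + 1) m => Chain S.BD q.1.1 q.1.2)
            (mBIdx (n + 1) m (hIdx ⟨(l, c + 1 + 1), hp⟩ h2) i)
            (mMap S.BD (hIdx ⟨(l, c + 1 + 1), hp⟩ h2).1.1
              (hIdx ⟨(l, c + 1 + 1), hp⟩ h2).1.2 i
              (S.hC (⟨(l, c + 1 + 1), hp⟩ : BIdx (n + 1) m).1.1
                ((⟨(l, c + 1 + 1), hp⟩ : BIdx (n + 1) m).1.2 - 1)
                (fcast S.Ch (BIdx_eta ⟨(l, c + 1 + 1), hp⟩ (le_trans one_le_two h2)) x₀)))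
            = DirectSum.of (fun q : BIdx (n + 1) m => Chain S.BD q.1.1 q.1.2)
              (hIdx (mBIdx n m ⟨(l, c + 1 + 1), hp⟩ i) hs)
              (S.hC (mBIdx n m ⟨(l, c + 1 + 1), hp⟩ i).1.1
                ((mBIdx n m ⟨(l, c + 1 + 1), hp⟩ i).1.2 - 1)
                (fcast S.Ch (BIdx_eta (mBIdx n m ⟨(l, c + 1 + 1), hp⟩ i)
                    (le_trans one_le_two hs))
                  (mMap S.BD l (c + 1 + 1) i x₀))) :=
          S.of_congr (KA_idx l i hi' (c + 1)) (S.KA_map l i hi' (c + 1) x₀)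
        erw [hE, smul_smul, smul_smul, ← neg_smul]
        have hc0 : (-1 : ℤ) ^ (n + 1) * (-1) ^ i = -((-1 : ℤ) ^ i * (-1) ^ n) := by
          rw [pow_succ]; ring
        erw [hc0]
        rfl
      erw [Finset.sum_congr rfl hcancel, Finset.sum_neg_distrib, add_right_comm,
        neg_add_cancel, zero_add, smul_smul, ← pow_add,
        Even.neg_one_pow ⟨n + 1, rfl⟩, one_smul]
      exact S.of_congr (K3_idx' hl.symm (c + 1)) (S.K3_map' hl.symm (c + 1) x₀)

theorem tor_zero (m : ℕ) (hm : m ≠ 1) : Subsingleton (Tor S.BD 0 m) := by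
  have hall : ∀ x : Bar S.BD 0 m, x ∈ (dBar S.BD 0 m).range := by
    intro x
    induction x using DirectSum.induction_on with
    | zero => exact zero_mem _
    | add a b ha hb => exact add_mem ha hb
    | of p w =>
      obtain ⟨⟨l, d⟩, hp⟩ := p
      obtain rfl : l = [] := List.length_eq_zero_iff.mp hp.1
      obtain rfl : d = m := by have := hp.2.1; simpa using this
      match d, hm, hp, w with
      | 0, hm, hp, w =>
        rw [S.chain_eq_zero [] w, map_zero]
        exact zero_mem _
      | 1, hm, hp, w => exact absurd rfl hm
      | (c + 1 + 1), hm, hp, w =>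
        refine ⟨DirectSum.of (fun q : BIdx 1 (c + 1 + 1) => Chain S.BD q.1.1 q.1.2)
          ⟨([c + 1], 1), rfl, by simp, ?_⟩ (tp (S.βb (c + 1) w) S.v₁), ?_⟩
        · intro a ha
          rw [List.mem_singleton] at ha
          omega
        · erw [dBar_of, Finset.sum_range_one, pow_zero, one_smul]
          exact S.of_congr rfl (S.sig_beta (c + 1) w)
  constructor
  intro a b
  refine QuotientAddGroup.induction_on a ?_
  intro xa
  refine QuotientAddGroup.induction_on b ?_
  intro xb
  erw [QuotientAddGroup.eq]
  exact add_mem (neg_mem (hall xa)) (hall xb)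

theorem tor_succ (n m : ℕ) : Subsingleton (Tor S.BD (n + 1) m) := by
  have hall : ∀ x ∈ (dBar S.BD n m).ker, x ∈ (dBar S.BD (n + 1) m).range := by
    intro x hx
    refine ⟨S.Hmap (n + 1) m x, ?_⟩
    have h := S.homotopy n m x
    rw [AddMonoidHom.mem_ker] at hx
    rw [hx, map_zero, add_zero] at h
    exact h
  constructor
  intro a b
  refine QuotientAddGroup.induction_on a ?_
  intro xa
  refine QuotientAddGroup.induction_on b ?_
  intro xb
  erw [QuotientAddGroup.eq]
  rw [AddSubgroup.mem_addSubgroupOf]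
  exact add_mem (neg_mem (hall xa.1 xa.2)) (hall xb.1 xb.2)

theorem tor_vanish (n m : ℕ) (hm : m ≠ n + 1) : Subsingleton (Tor S.BD n m) := by
  cases n with
  | zero => exact S.tor_zero m hm
  | succ n => exact S.tor_succ n m

end Setup

/-- Let `P` be a finite graded poset, `t` a maximal element,
`Q = P \ {t}`, `u` a predecessor of `t` and `B = k^a[Q]`.  Then
`Tor_{n-1,m}^B(S, B·e_{u,t}) = 0` for all `m ≠ n`.  (Here the graded left
`B`-module `B·e_{u,t}`, with basis `{e_{x,t} : x ≤ u}` and `e_{x,t}` of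
degree `l([x,t])`, is axiomatised as `V` below, and the vanishing is stated with
the index shift `n ↦ n + 1`.) -/
theorem tor_of_shifted_projective_vanishes
    (k : Type) [Field k] (P : Type) [PartialOrder P] [Fintype P] [DecidableEq P]
    (ρ : P → P → ℕ) (hρ : LengthFn ρ)
    (A : Type) [Ring A] [Algebra k A] (inc : IncAlg k P A)
    (GA : GRing (P → k) A) (hGA : IncGrading inc ρ GA)
    (t : P) (ht : ∀ x : P, t ≤ x → x = t)
    (u : P) (hu : u ⋖ t)
    (B : Type) [Ring B] [Algebra k B]
    (incB : IncAlg k {x : P // x ≠ t} B)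
    (hρQ : LengthFn (fun x y : {x : P // x ≠ t} => ρ ↑x ↑y))
    (GB : GRing ({x : P // x ≠ t} → k) B)
    (hGB : IncGrading incB (fun x y : {x : P // x ≠ t} => ρ ↑x ↑y) GB)
    (V : Type) [AddCommGroup V] [Module B V] [Module k V] [IsScalarTower k B V]
    (vb : {x : P // x ≤ u} → V)
    (hvb_indep : LinearIndependent k vb)
    (hvb_span : Submodule.span k (Set.range vb) = ⊤)
    (hact : ∀ (x y : {x : P // x ≠ t}) (h : x ≤ y) (z : {x : P // x ≤ u}),
      incB.e x y • vb z =
        if hyz : (↑y : P) = ↑z then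
          vb ⟨↑x, (Subtype.coe_le_coe.mpr h).trans ((le_of_eq hyz).trans z.2)⟩
        else 0)
    (gm : GMod GB V)
    (hgm : ∀ d : ℕ, (gm.deg d : Set V) =
      ↑(Submodule.span k {w : V | ∃ z : {x : P // x ≤ u}, ρ ↑z t = d ∧ w = vb z})) :
    ∀ n m : ℕ, m ≠ n + 1 → Subsingleton (gm.TorR n m) := by
  intro n m hm
  exact Setup.tor_vanish
    { k := k, P := P, ρ := ρ, hρ := hρ, t := t, u := u, hu := hu, B := B,
      incB := incB, GB := GB, hGB := hGB, V := V, vb := vb,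
      hvb_indep := hvb_indep, hvb_span := hvb_span, hact := hact,
      gm := gm, hgm := hgm } n m hm


end P1605
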